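/- Let Γ be a tetravalent G-half-arc-transitive graph for some G ≤ Aut(Γ) such that 3 ≤ a < r, where r = rad_G(Γ) and a = att_G(Γ), and suppose a does not divide r. Let q = jum_G(Γ), let ℓ = 2r/a, let C be a G-alternating cycle of Γ and let γ be a nontrivial element of K_G(Alt_G(Γ)). Then for some 0 < k ≤ a/2 the restriction of the action of γ to C is a kℓ-step rotation; moreover, for any two non-disjoint G-alternating cycles of Γ, the restriction of the action of γ is a kℓ-step rotation on one of them and a qkℓ-step rotation on the other. -/

import Mathlib

/-! Common definitions for tetravalent half-arc-transitive graph theory. -/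

open SimpleGraph Set

namespace HalfArc

variable {V W : Type*}

/-- A subgroup of automorphisms acts transitively on the vertices. -/
def IsVertexTrans (Γ : SimpleGraph V) (G : Subgroup (Γ ≃g Γ)) : Prop :=
  ∀ u v : V, ∃ g ∈ G, g u = v

/-- A subgroup of automorphisms acts transitively on the edges. -/
def IsEdgeTrans (Γ : SimpleGraph V) (G : Subgroup (Γ ≃g Γ)) : Prop :=
  ∀ ⦃u v u' v' : V⦄, Γ.Adj u v → Γ.Adj u' v' →
    ∃ g ∈ G, (g u = u' ∧ g v = v') ∨ (g u = v' ∧ g v = u')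

/-- A subgroup of automorphisms acts transitively on the arcs (ordered pairs of
adjacent vertices). -/
def IsArcTrans (Γ : SimpleGraph V) (G : Subgroup (Γ ≃g Γ)) : Prop :=
  ∀ ⦃u v u' v' : V⦄, Γ.Adj u v → Γ.Adj u' v' → ∃ g ∈ G, g u = u' ∧ g v = v'

/-- Half-arc-transitive: vertex- and edge- but not arc-transitive. -/
def IsHalfArcTrans (Γ : SimpleGraph V) (G : Subgroup (Γ ≃g Γ)) : Prop :=
  IsVertexTrans Γ G ∧ IsEdgeTrans Γ G ∧ ¬ IsArcTrans Γ G

/-- An alternating cycle of length `n` in a graph `Γ` whose edges carry an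
orientation `O`: a cyclic sequence of pairwise distinct vertices in which
consecutive vertices are adjacent and any two consecutive edges have opposite
orientations. -/
structure AltCycle (Γ : SimpleGraph V) (O : V → V → Prop) (n : ℕ) where
  f : ZMod n → V
  inj : Function.Injective f
  adj : ∀ i, Γ.Adj (f i) (f (i + 1))
  alt : ∀ i, O (f i) (f (i + 1)) ↔ O (f (i + 2)) (f (i + 1))

/-- The vertex set of an alternating cycle. -/
def cycVerts {Γ : SimpleGraph V} {O : V → V → Prop} {n : ℕ} (c : AltCycle Γ O n) : Set V :=
  Set.range c.f

/-- The edge set of an alternating cycle. -/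
def cycEdges {Γ : SimpleGraph V} {O : V → V → Prop} {n : ℕ} (c : AltCycle Γ O n) :
    Set (Sym2 V) :=
  Set.range fun i => s(c.f i, c.f (i + 1))

/-- The sets of edges of alternating cycles (an alternating cycle, as a subgraph,
is determined by its edge set). -/
def IsAltEdgeSet (Γ : SimpleGraph V) (O : V → V → Prop) (n : ℕ) (E : Set (Sym2 V)) : Prop :=
  ∃ c : AltCycle Γ O n, cycEdges c = E

/-- The vertex sets of alternating cycles. -/
def IsAltVertSet (Γ : SimpleGraph V) (O : V → V → Prop) (n : ℕ) (A : Set V) : Prop :=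
  ∃ c : AltCycle Γ O n, cycVerts c = A

/-- The set of vertices covered by a set of edges. -/
def suppOf (E : Set (Sym2 V)) : Set V := {v | ∃ e ∈ E, v ∈ e}

/-- The graph of alternating cycles: its vertices are the alternating cycles
(represented by their edge sets), two of them adjacent whenever they share a vertex. -/
def altGraph (Γ : SimpleGraph V) (O : V → V → Prop) (n : ℕ) :
    SimpleGraph {E : Set (Sym2 V) // IsAltEdgeSet Γ O n E} where
  Adj X Y := X ≠ Y ∧ (suppOf X.1 ∩ suppOf Y.1).Nonempty
  symm := by
    constructor
    rintro X Y ⟨hne, x, hx1, hx2⟩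
    exact ⟨hne.symm, x, hx2, hx1⟩
  loopless := by constructor; rintro X ⟨hne, -⟩; exact hne rfl

/-- The attachment sets: nonempty intersections of (the vertex sets of) two distinct
alternating cycles. -/
def IsAttSet (Γ : SimpleGraph V) (O : V → V → Prop) (n : ℕ) (A : Set V) : Prop :=
  ∃ c c' : AltCycle Γ O n, cycEdges c ≠ cycEdges c' ∧ (cycVerts c ∩ cycVerts c').Nonempty ∧
    A = cycVerts c ∩ cycVerts c'

/-- `attachmentIs Γ O n a` : any two distinct alternating cycles with nonempty
intersection meet in exactly `a` vertices. -/
def attachmentIs (Γ : SimpleGraph V) (O : V → V → Prop) (n a : ℕ) : Prop :=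
  ∀ A : Set V, IsAttSet Γ O n A → A.ncard = a

/-- A `k`-step rotation of an alternating cycle (in one of the two directions). -/
def IsRot {Γ : SimpleGraph V} {O : V → V → Prop} {n : ℕ} (c : AltCycle Γ O n)
    (g : V → V) (k : ℕ) : Prop :=
  (∀ i, g (c.f i) = c.f (i + k)) ∨ (∀ i, g (c.f i) = c.f (i - k))

/-- The setup of the paper: a finite connected tetravalent graph `Γ`, a subgroup `G`
of its automorphism group acting half-arc-transitively, one of the two `G`-induced
orientations `O` of the edges of `Γ` (an orbit of `G` on arcs), the `G`-radius `r`
(half the common length of all `G`-alternating cycles) and the `G`-attachment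
number `att`, together with the basic structural facts relating them. -/
structure Setup (V : Type*) where
  Γ : SimpleGraph V
  finite : Finite V
  conn : Γ.Connected
  tetra : ∀ v : V, (Γ.neighborSet v).ncard = 4
  G : Subgroup (Γ ≃g Γ)
  hat : IsHalfArcTrans Γ G
  O : V → V → Prop
  O_adj : ∀ ⦃u v⦄, O u v → Γ.Adj u v
  O_choice : ∀ ⦃u v⦄, Γ.Adj u v → (O u v ↔ ¬ O v u)
  O_inv : ∀ g ∈ G, ∀ ⦃u v⦄, O u v → O (g u) (g v)
  O_orbit : ∀ ⦃u v u' v'⦄, O u v → O u' v' → ∃ g ∈ G, g u = u' ∧ g v = v'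
  r : ℕ
  r_pos : 0 < r
  /-- every vertex lies on exactly two `G`-alternating cycles, each of length `2 * r` -/
  alt_cover : ∀ v : V, {E : Set (Sym2 V) | IsAltEdgeSet Γ O (2 * r) E ∧ v ∈ suppOf E}.ncard = 2
  att : ℕ
  att_pos : 0 < att
  /-- any two non-disjoint `G`-alternating cycles meet in exactly `att` vertices -/
  att_eq : attachmentIs Γ O (2 * r) att
  att_dvd : att ∣ 2 * r

namespace Setup

variable {V : Type*} (S : Setup V)

/-- The kernel of the action of `G` on the set of `G`-alternating cycles:
the elements of `G` fixing every `G`-alternating cycle setwise. -/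
def altKernel : Subgroup (S.Γ ≃g S.Γ) where
  carrier := {g | g ∈ S.G ∧ ∀ E : Set (Sym2 V),
    IsAltEdgeSet S.Γ S.O (2 * S.r) E → Sym2.map (g : V → V) '' E = E}
  one_mem' := by
    refine ⟨S.G.one_mem, fun E _ => ?_⟩
    have : Sym2.map ((1 : S.Γ ≃g S.Γ) : V → V) = id := by
      funext e
      have : ((1 : S.Γ ≃g S.Γ) : V → V) = id := rfl
      rw [this, Sym2.map_id, id]
    rw [this, Set.image_id]
  mul_mem' := by
    rintro g h ⟨hg, hg'⟩ ⟨hh, hh'⟩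
    refine ⟨S.G.mul_mem hg hh, fun E hE => ?_⟩
    have hcomp : Sym2.map ((g * h : S.Γ ≃g S.Γ) : V → V)
        = Sym2.map (g : V → V) ∘ Sym2.map (h : V → V) := by
      funext e
      have : ((g * h : S.Γ ≃g S.Γ) : V → V) = (g : V → V) ∘ (h : V → V) := rfl
      rw [this, Function.comp_apply, ← Sym2.map_map]
    rw [hcomp, Set.image_comp, hh' E hE, hg' E hE]
  inv_mem' := by
    rintro g ⟨hg, hg'⟩
    refine ⟨S.G.inv_mem hg, fun E hE => ?_⟩
    conv_lhs => rw [← hg' E hE]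
    rw [← Set.image_comp]
    have : Sym2.map ((g⁻¹ : S.Γ ≃g S.Γ) : V → V) ∘ Sym2.map (g : V → V) = id := by
      funext e
      rw [Function.comp_apply, Sym2.map_map]
      have h1 : ((g⁻¹ : S.Γ ≃g S.Γ) : V → V) ∘ (g : V → V) = id := by
        funext v
        exact g.toEquiv.symm_apply_apply v
      rw [h1, Sym2.map_id]
    rw [this, Set.image_id]

/-- The kernel of the action of `G` on a collection of sets of vertices. -/
def kernelOn (P : Set V → Prop) : Subgroup (S.Γ ≃g S.Γ) where
  carrier := {g | g ∈ S.G ∧ ∀ A : Set V, P A → (g : V → V) '' A = A}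
  one_mem' := ⟨S.G.one_mem, fun A _ => by
    have : ((1 : S.Γ ≃g S.Γ) : V → V) = id := rfl
    rw [this, Set.image_id]⟩
  mul_mem' := by
    rintro g h ⟨hg, hg'⟩ ⟨hh, hh'⟩
    refine ⟨S.G.mul_mem hg hh, fun A hA => ?_⟩
    have : ((g * h : S.Γ ≃g S.Γ) : V → V) = (g : V → V) ∘ (h : V → V) := rfl
    rw [this, Set.image_comp, hh' A hA, hg' A hA]
  inv_mem' := by
    rintro g ⟨hg, hg'⟩
    refine ⟨S.G.inv_mem hg, fun A hA => ?_⟩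
    conv_lhs => rw [← hg' A hA]
    rw [← Set.image_comp]
    have : ((g⁻¹ : S.Γ ≃g S.Γ) : V → V) ∘ (g : V → V) = id := by
      funext v; exact g.toEquiv.symm_apply_apply v
    rw [this, Set.image_id]

/-- The kernel of the action of `G` on the set of all `G`-attachment sets. -/
def attKernel : Subgroup (S.Γ ≃g S.Γ) :=
  S.kernelOn (IsAttSet S.Γ S.O (2 * S.r))

/-- The block `B_s(C; u_i) = {u_{i+2sj} : 0 ≤ j < att}` of Construction 5.3. -/
def blockSet (s : ℕ) (c : AltCycle S.Γ S.O (2 * S.r)) (i : ZMod (2 * S.r)) : Set V :=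
  {v | ∃ j : ℕ, j < S.att ∧ v = c.f (i + (2 * s * j : ℕ))}

/-- The imprimitivity block system `B` of Construction 5.3. -/
def Blocks (s : ℕ) : Set (Set V) :=
  {A | ∃ (c : AltCycle S.Γ S.O (2 * S.r)) (i : ZMod (2 * S.r)), A = S.blockSet s c i}

/-- The quotient graph `Γ_B` of `Γ` with respect to the block system `B`. -/
def quotGraph (s : ℕ) : SimpleGraph {A : Set V // A ∈ S.Blocks s} where
  Adj X Y := X ≠ Y ∧ ∃ u ∈ X.1, ∃ v ∈ Y.1, S.Γ.Adj u v
  symm := by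
    constructor
    rintro X Y ⟨hne, u, hu, v, hv, ha⟩
    exact ⟨hne.symm, v, hv, u, hu, ha.symm⟩
  loopless := by constructor; rintro X ⟨hne, -⟩; exact hne rfl

/-- The kernel of the action of `G` on the quotient graph `Γ_B`. -/
def quotKernel (s : ℕ) : Subgroup (S.Γ ≃g S.Γ) :=
  S.kernelOn (· ∈ S.Blocks s)

/-- The orientation of the edges of the quotient graph `Γ_B` induced by `O`. -/
def quotO (s : ℕ) (X Y : {A : Set V // A ∈ S.Blocks s}) : Prop :=
  ∃ u ∈ X.1, ∃ v ∈ Y.1, S.O u v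

end Setup

/-- The data defining the parameters `q_t` and `q_h` of Section 3: a vertex `v`,
the two `G`-alternating cycles `c` and `c'` through `v` (with `v = u_0 = v_0` and
`v` the tail of the two arcs of `c` incident to it), and the minimality properties
defining `q_t` and `q_h`.  Here `ell = 2r/att`. -/
structure JumpData {V : Type*} (S : Setup V) where
  v : V
  c : AltCycle S.Γ S.O (2 * S.r)
  c' : AltCycle S.Γ S.O (2 * S.r)
  ell : ℕ
  hell : S.att * ell = 2 * S.r
  hc : c.f 0 = v
  hc' : c'.f 0 = v
  hne : cycEdges c ≠ cycEdges c'
  htail₁ : S.O v (c.f 1)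
  htail₂ : S.O v (c.f (-1))
  qt : ℕ
  qh : ℕ
  hqt : c'.f ((qt * ell : ℕ)) = c.f ((ell : ℕ)) ∨
    c'.f ((qt * ell : ℕ)) = c.f (-(ell : ZMod (2 * S.r)))
  hqt_min : ∀ m : ℕ, m < qt → ¬(c'.f ((m * ell : ℕ)) = c.f ((ell : ℕ)) ∨
    c'.f ((m * ell : ℕ)) = c.f (-(ell : ZMod (2 * S.r))))
  hqh : c.f ((qh * ell : ℕ)) = c'.f ((ell : ℕ)) ∨
    c.f ((qh * ell : ℕ)) = c'.f (-(ell : ZMod (2 * S.r)))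
  hqh_min : ∀ m : ℕ, m < qh → ¬(c.f ((m * ell : ℕ)) = c'.f ((ell : ℕ)) ∨
    c.f ((m * ell : ℕ)) = c'.f (-(ell : ZMod (2 * S.r))))

/-- The `G`-alternating jump `jum_G(Γ) = min {q_t, q_h}`. -/
def JumpData.jump {V : Type*} {S : Setup V} (J : JumpData S) : ℕ := min J.qt J.qh

namespace Setup

variable {V : Type*} {S : Setup V}

/-- Abbreviation for alternating cycles of the setup. -/
abbrev AC (S : Setup V) := AltCycle S.Γ S.O (2 * S.r)

lemma nz2r (S : Setup V) : NeZero (2 * S.r) := ⟨by have := S.r_pos; omega⟩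

lemma one_ne_zero2r (S : Setup V) : (1 : ZMod (2 * S.r)) ≠ 0 := by
  haveI := S.nz2r
  have h : ((1:ℕ) : ZMod (2*S.r)) ≠ 0 := by
    rw [Ne, ZMod.natCast_eq_zero_iff]
    intro h
    have := Nat.le_of_dvd one_pos h
    have := S.r_pos
    omega
  simpa using h

lemma two_ne_zero2r (hr : 2 ≤ S.r) : (2 : ZMod (2 * S.r)) ≠ 0 := by
  haveI := S.nz2r
  have h : ((2:ℕ) : ZMod (2*S.r)) ≠ 0 := by
    rw [Ne, ZMod.natCast_eq_zero_iff]
    intro h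
    have := Nat.le_of_dvd two_pos h
    omega
  simpa using h

lemma step_ne (S : Setup V) (i : ZMod (2*S.r)) : i + 1 ≠ i := by
  intro h
  have : (1 : ZMod (2*S.r)) = 0 := by
    have := congrArg (fun x => x - i) h
    simpa using this
  exact S.one_ne_zero2r this

lemma mem_cycVerts {c : S.AC} {v : V} : v ∈ cycVerts c ↔ ∃ i, c.f i = v := Iff.rfl

lemma f_mem_cycVerts (c : S.AC) (i : ZMod (2*S.r)) : c.f i ∈ cycVerts c := ⟨i, rfl⟩

lemma edge_mem_cycEdges (c : S.AC) (i : ZMod (2*S.r)) :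
    s(c.f i, c.f (i+1)) ∈ cycEdges c := ⟨i, rfl⟩

lemma suppOf_cycEdges (c : S.AC) : suppOf (cycEdges c) = cycVerts c := by
  ext v
  constructor
  · rintro ⟨e, ⟨i, rfl⟩, hv⟩
    rcases Sym2.mem_iff.mp hv with h | h
    · exact ⟨i, h.symm⟩
    · exact ⟨i+1, h.symm⟩
  · rintro ⟨i, rfl⟩
    exact ⟨s(c.f i, c.f (i+1)), ⟨i, rfl⟩, Sym2.mem_mk_left _ _⟩

/-- An edge of the cycle through a given vertex of the cycle is one of the two
cycle edges at that position. -/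
lemma edges_at {c : S.AC} {e : Sym2 V} {j : ZMod (2*S.r)} (he : e ∈ cycEdges c)
    (hj : c.f j ∈ e) : e = s(c.f (j-1), c.f j) ∨ e = s(c.f j, c.f (j+1)) := by
  obtain ⟨i, rfl⟩ := he
  rcases Sym2.mem_iff.mp hj with h | h
  · right
    have hji : j = i := c.inj h
    subst hji; rfl
  · left
    have hji : j = i + 1 := c.inj h
    subst hji
    rw [add_sub_cancel_right]

/-- The neighbour of a vertex along an edge of the cycle is one of the two
cycle neighbours. -/
lemma next_of_edge {c : S.AC} {j : ZMod (2*S.r)} {y : V}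
    (he : s(c.f j, y) ∈ cycEdges c) : y = c.f (j+1) ∨ y = c.f (j-1) := by
  rcases edges_at he (Sym2.mem_mk_left _ _) with h | h
  · rcases Sym2.eq_iff.mp h with ⟨h1, h2⟩ | ⟨h1, h2⟩
    · exfalso
      have hj : j = j - 1 := c.inj h1
      have h0 : (1 : ZMod (2*S.r)) = 0 := by linear_combination hj
      exact S.one_ne_zero2r h0
    · right; exact h2
  · rcases Sym2.eq_iff.mp h with ⟨h1, h2⟩ | ⟨h1, h2⟩
    · left; exact h2
    · exfalso
      exact S.step_ne j (c.inj h1).symm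

/-- Shift the parametrisation of a cycle. -/
def shiftC (c : S.AC) (p : ZMod (2*S.r)) : S.AC where
  f := fun i => c.f (p + i)
  inj := fun i j h => by have := c.inj h; exact add_left_cancel this
  adj := fun i => by have := c.adj (p + i); rwa [add_assoc] at this
  alt := fun i => by
    have := c.alt (p + i)
    rwa [show p + i + 1 = p + (i+1) by ring, show p + i + 2 = p + (i+2) by ring] at this

@[simp] lemma shiftC_f (c : S.AC) (p i : ZMod (2*S.r)) : (shiftC c p).f i = c.f (p + i) := rfl

lemma cycEdges_shiftC (c : S.AC) (p : ZMod (2*S.r)) : cycEdges (shiftC c p) = cycEdges c := by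
  ext e
  constructor
  · rintro ⟨i, rfl⟩
    exact ⟨p + i, by simp only [shiftC_f]; rw [add_assoc]⟩
  · rintro ⟨i, rfl⟩
    exact ⟨i - p, by simp only [shiftC_f]; rw [show p + (i - p) = i from by ring,
      show p + (i - p + 1) = i + 1 from by ring]⟩

lemma cycVerts_shiftC (c : S.AC) (p : ZMod (2*S.r)) : cycVerts (shiftC c p) = cycVerts c := by
  ext v
  constructor
  · rintro ⟨i, rfl⟩; exact ⟨p + i, rfl⟩
  · rintro ⟨i, rfl⟩; exact ⟨i - p, by simp only [shiftC_f]; rw [show p + (i-p) = i from by ring]⟩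

/-- Reverse the parametrisation of a cycle. -/
def revC (c : S.AC) : S.AC where
  f := fun i => c.f (-i)
  inj := fun i j h => by have := c.inj h; exact neg_injective this
  adj := fun i => by
    have := c.adj (-(i+1))
    rw [show -(i+1) + 1 = -i by ring] at this
    exact this.symm
  alt := fun i => by
    have := c.alt (-(i+2))
    rw [show -(i+2) + 1 = -(i+1) by ring, show -(i+2) + 2 = -i by ring] at this
    exact this.symm

@[simp] lemma revC_f (c : S.AC) (i : ZMod (2*S.r)) : (revC c).f i = c.f (-i) := rfl

lemma cycEdges_revC (c : S.AC) : cycEdges (revC c) = cycEdges c := by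
  ext e
  constructor
  · rintro ⟨i, rfl⟩
    refine ⟨-(i+1), ?_⟩
    simp only [revC_f]
    rw [show -(i+1) + 1 = -i from by ring]
    exact Sym2.eq_swap
  · rintro ⟨i, rfl⟩
    refine ⟨-(i+1), ?_⟩
    simp only [revC_f]
    rw [show -(-(i+1)) = i + 1 from by ring, show -(-(i+1)+1) = i from by ring]
    exact Sym2.eq_swap

lemma cycVerts_revC (c : S.AC) : cycVerts (revC c) = cycVerts c := by
  ext v
  constructor
  · rintro ⟨i, rfl⟩; exact ⟨-i, rfl⟩
  · rintro ⟨i, rfl⟩; exact ⟨-i, by simp only [revC_f]; rw [neg_neg]⟩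

lemma O_iff {g : S.Γ ≃g S.Γ} (hg : g ∈ S.G) (u v : V) : S.O (g u) (g v) ↔ S.O u v := by
  constructor
  · intro h
    have h2 := S.O_inv g⁻¹ (S.G.inv_mem hg) h
    have e1 : (g⁻¹ : S.Γ ≃g S.Γ) (g u) = u := g.toEquiv.symm_apply_apply u
    have e2 : (g⁻¹ : S.Γ ≃g S.Γ) (g v) = v := g.toEquiv.symm_apply_apply v
    rwa [e1, e2] at h2
  · exact fun h => S.O_inv g hg h

/-- The image of an alternating cycle under an automorphism in `G`. -/
def mapC (g : S.Γ ≃g S.Γ) (hg : g ∈ S.G) (c : S.AC) : S.AC where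
  f := fun i => g (c.f i)
  inj := fun i j h => c.inj (g.toEquiv.injective h)
  adj := fun i => g.map_adj_iff.mpr (c.adj i)
  alt := fun i => by
    rw [O_iff hg, O_iff hg]
    exact c.alt i

@[simp] lemma mapC_f (g : S.Γ ≃g S.Γ) (hg : g ∈ S.G) (c : S.AC) (i : ZMod (2*S.r)) :
    (mapC g hg c).f i = g (c.f i) := rfl

lemma cycEdges_mapC (g : S.Γ ≃g S.Γ) (hg : g ∈ S.G) (c : S.AC) :
    cycEdges (mapC g hg c) = Sym2.map (g : V → V) '' cycEdges c := by
  ext e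
  constructor
  · rintro ⟨i, rfl⟩
    exact ⟨s(c.f i, c.f (i+1)), ⟨i, rfl⟩, rfl⟩
  · rintro ⟨e', ⟨i, rfl⟩, rfl⟩
    exact ⟨i, rfl⟩

lemma cycVerts_mapC (g : S.Γ ≃g S.Γ) (hg : g ∈ S.G) (c : S.AC) :
    cycVerts (mapC g hg c) = (g : V → V) '' cycVerts c := by
  ext v
  constructor
  · rintro ⟨i, rfl⟩; exact ⟨c.f i, ⟨i, rfl⟩, rfl⟩
  · rintro ⟨w, ⟨i, rfl⟩, rfl⟩; exact ⟨i, rfl⟩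

end Setup

namespace Setup

variable {V : Type*} {S : Setup V}

/-- The position `x` on the cycle `c` is a tail (both incident cycle edges point out). -/
def isTail (c : S.AC) (x : ZMod (2*S.r)) : Prop := S.O (c.f x) (c.f (x+1))

lemma adj_back (c : S.AC) (x : ZMod (2*S.r)) : S.Γ.Adj (c.f x) (c.f (x-1)) := by
  have := c.adj (x-1)
  rw [sub_add_cancel] at this
  exact this.symm

lemma isTail_iff_back (c : S.AC) (x : ZMod (2*S.r)) :
    isTail c x ↔ S.O (c.f x) (c.f (x-1)) := by
  have halt := c.alt (x-1)
  rw [sub_add_cancel, show x - 1 + 2 = x + 1 from by ring] at halt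
  show S.O (c.f x) (c.f (x+1)) ↔ S.O (c.f x) (c.f (x-1))
  rw [S.O_choice (c.adj x), S.O_choice (adj_back c x), halt]

lemma isTail_succ (c : S.AC) (x : ZMod (2*S.r)) : isTail c (x+1) ↔ ¬ isTail c x := by
  have halt := c.alt x
  have h1 := S.O_choice (c.adj (x+1))
  rw [show x + 1 + 1 = x + 2 from by ring] at h1
  show S.O (c.f (x+1)) (c.f (x+1+1)) ↔ ¬ S.O (c.f x) (c.f (x+1))
  rw [show x + 1 + 1 = x + 2 from by ring, h1, halt]

lemma isTail_add_nat (c : S.AC) (x : ZMod (2*S.r)) (m : ℕ) :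
    isTail c (x + m) ↔ (Even m ↔ isTail c x) := by
  induction m with
  | zero => simp
  | succ m ih =>
    have : (x + ((m+1 : ℕ) : ZMod (2*S.r))) = (x + m) + 1 := by push_cast; ring
    rw [this, isTail_succ, ih, Nat.even_add_one]
    tauto

lemma exists_out_arc (J : JumpData S) (v : V) : ∃ w, S.O v w := by
  obtain ⟨g, hg, hgv⟩ := S.hat.1 J.v v
  exact ⟨g (J.c.f 1), hgv ▸ S.O_inv g hg (J.hc ▸ J.htail₁)⟩

lemma exists_in_arc (J : JumpData S) (v : V) : ∃ u, S.O u v := by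
  obtain ⟨g, hg, hgv⟩ := S.hat.1 (J.c.f 1) v
  exact ⟨g J.v, hgv ▸ S.O_inv g hg (J.hc ▸ J.htail₁)⟩

lemma edge_on_cycle (J : JumpData S) {u w : V} (h : S.Γ.Adj u w) :
    ∃ c : S.AC, s(u, w) ∈ cycEdges c := by
  have hbase := J.c.adj 0
  rw [zero_add] at hbase
  rcases S.hat.2.1 hbase h with ⟨g, hg, ⟨h1, h2⟩ | ⟨h1, h2⟩⟩
  · refine ⟨mapC g hg J.c, ?_⟩
    have := edge_mem_cycEdges (mapC g hg J.c) 0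
    rw [mapC_f, mapC_f, zero_add, h1, h2] at this
    exact this
  · refine ⟨mapC g hg J.c, ?_⟩
    have := edge_mem_cycEdges (mapC g hg J.c) 0
    rw [mapC_f, mapC_f, zero_add, h1, h2] at this
    rw [Sym2.eq_swap] at this
    exact this

lemma isAlt_cycEdges (c : S.AC) : IsAltEdgeSet S.Γ S.O (2*S.r) (cycEdges c) := ⟨c, rfl⟩

lemma mem_coverSet {c : S.AC} {v : V} (hv : v ∈ cycVerts c) :
    cycEdges c ∈ {E : Set (Sym2 V) | IsAltEdgeSet S.Γ S.O (2 * S.r) E ∧ v ∈ suppOf E} :=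
  ⟨isAlt_cycEdges c, by rw [suppOf_cycEdges]; exact hv⟩

/-- Any cycle through `v` has the edge set of one of two given distinct cycles through `v`. -/
lemma two_of_three {v : V} {b c d : S.AC} (hb : v ∈ cycVerts b) (hc : v ∈ cycVerts c)
    (hd : v ∈ cycVerts d) (hbc : cycEdges b ≠ cycEdges c) :
    cycEdges d = cycEdges b ∨ cycEdges d = cycEdges c := by
  obtain ⟨E₁, E₂, hE, hset⟩ := Set.ncard_eq_two.mp (S.alt_cover v)
  have h1 := mem_coverSet hb
  have h2 := mem_coverSet hc
  have h3 := mem_coverSet hd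
  rw [hset] at h1 h2 h3
  simp only [Set.mem_insert_iff, Set.mem_singleton_iff] at h1 h2 h3
  rcases h1 with h1 | h1 <;> rcases h2 with h2 | h2 <;> rcases h3 with h3 | h3 <;>
    simp_all <;> tauto

lemma other_cycle (c : S.AC) (i : ZMod (2*S.r)) :
    ∃ d : S.AC, c.f i ∈ cycVerts d ∧ cycEdges d ≠ cycEdges c := by
  obtain ⟨E₁, E₂, hE, hset⟩ := Set.ncard_eq_two.mp (S.alt_cover (c.f i))
  have h1 := mem_coverSet (f_mem_cycVerts c i)
  rw [hset] at h1
  simp only [Set.mem_insert_iff, Set.mem_singleton_iff] at h1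
  have : ∃ E', E' ∈ ({E₁, E₂} : Set (Set (Sym2 V))) ∧ E' ≠ cycEdges c := by
    rcases h1 with h1 | h1
    · exact ⟨E₂, by simp, by rw [← h1] at hE; exact hE.symm⟩
    · exact ⟨E₁, by simp, by rw [← h1] at hE; exact hE⟩
  obtain ⟨E', hE', hne⟩ := this
  have hmem : E' ∈ {E : Set (Sym2 V) | IsAltEdgeSet S.Γ S.O (2 * S.r) E ∧ c.f i ∈ suppOf E} := by
    rw [hset]; exact hE'
  obtain ⟨⟨d, hd⟩, hsupp⟩ := hmem
  refine ⟨d, ?_, by rw [hd]; exact hne⟩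
  rw [← suppOf_cycEdges, hd]
  exact hsupp

lemma no_in_arc_at_tail {c : S.AC} {x : ZMod (2*S.r)} {u : V} (ht : isTail c x)
    (hu : S.O u (c.f x)) (he : s(c.f x, u) ∈ cycEdges c) : False := by
  rcases next_of_edge he with h | h
  · subst h
    exact (S.O_choice (c.adj x)).mp ht hu
  · subst h
    exact (S.O_choice (adj_back c x)).mp ((isTail_iff_back c x).mp ht) hu

lemma no_out_arc_at_head {c : S.AC} {x : ZMod (2*S.r)} {w : V} (ht : ¬ isTail c x)
    (hw : S.O (c.f x) w) (he : s(c.f x, w) ∈ cycEdges c) : False := by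
  rcases next_of_edge he with h | h
  · subst h; exact ht hw
  · subst h
    exact ht ((isTail_iff_back c x).mpr hw)

/-- A vertex is a tail on exactly one of two distinct cycles through it. -/
lemma tail_xor (J : JumpData S) {c d : S.AC} {x y : ZMod (2*S.r)} (hv : c.f x = d.f y)
    (hne : cycEdges c ≠ cycEdges d) : isTail c x ↔ ¬ isTail d y := by
  have claim1 : ¬ (isTail c x ∧ isTail d y) := by
    rintro ⟨h1, h2⟩
    obtain ⟨u, hu⟩ := exists_in_arc J (c.f x)
    obtain ⟨F, hF⟩ := edge_on_cycle J (S.O_adj hu).symm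
    have hvF : c.f x ∈ cycVerts F := by
      rw [← suppOf_cycEdges]
      exact ⟨_, hF, Sym2.mem_mk_left _ _⟩
    rcases two_of_three (f_mem_cycVerts c x) (hv ▸ f_mem_cycVerts d y) hvF hne with hFc | hFd
    · rw [hFc] at hF
      exact no_in_arc_at_tail h1 hu hF
    · rw [hFd, hv] at hF
      rw [hv] at hu
      exact no_in_arc_at_tail h2 hu hF
  have claim2 : ¬ (¬ isTail c x ∧ ¬ isTail d y) := by
    rintro ⟨h1, h2⟩
    obtain ⟨w, hw⟩ := exists_out_arc J (c.f x)
    obtain ⟨F, hF⟩ := edge_on_cycle J (S.O_adj hw)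
    have hvF : c.f x ∈ cycVerts F := by
      rw [← suppOf_cycEdges]
      exact ⟨_, hF, Sym2.mem_mk_left _ _⟩
    rcases two_of_three (f_mem_cycVerts c x) (hv ▸ f_mem_cycVerts d y) hvF hne with hFc | hFd
    · rw [hFc] at hF
      exact no_out_arc_at_head h1 hw hF
    · rw [hFd, hv] at hF
      rw [hv] at hw
      exact no_out_arc_at_head h2 hw hF
  tauto

lemma tail_of_arc_mem {c : S.AC} {p q : V} {z : ZMod (2*S.r)} (hO : S.O p q)
    (he : s(p, q) ∈ cycEdges c) (hz : c.f z = p) : isTail c z := by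
  subst hz
  rcases next_of_edge he with h | h
  · subst h; exact hO
  · subst h; exact (isTail_iff_back c z).mpr hO

/-- Two alternating cycles sharing an edge have the same edge set. -/
lemma edge_unique (J : JumpData S) {b c : S.AC} {e : Sym2 V} (heb : e ∈ cycEdges b)
    (hec : e ∈ cycEdges c) : cycEdges b = cycEdges c := by
  by_contra hne
  obtain ⟨i, rfl⟩ := heb
  replace hec : s(b.f i, b.f (i+1)) ∈ cycEdges c := hec
  have hadj : S.Γ.Adj (b.f i) (b.f (i+1)) := b.adj i
  have hwc : b.f (i+1) ∈ cycVerts c := by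
    rw [← suppOf_cycEdges]
    exact ⟨_, hec, Sym2.mem_mk_right _ _⟩
  have huc : b.f i ∈ cycVerts c := by
    rw [← suppOf_cycEdges]
    exact ⟨_, hec, Sym2.mem_mk_left _ _⟩
  by_cases hO : S.O (b.f i) (b.f (i+1))
  · obtain ⟨z, hz⟩ := huc
    have h1 : isTail b i := tail_of_arc_mem hO (edge_mem_cycEdges b i) rfl
    have h2 : isTail c z := tail_of_arc_mem hO hec hz
    exact ((tail_xor J (hz.symm) hne).mp h1) h2
  · have hO' : S.O (b.f (i+1)) (b.f i) := by
      by_contra h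
      exact hO ((S.O_choice hadj).mpr h)
    obtain ⟨z, hz⟩ := hwc
    have h1 : isTail b (i+1) :=
      tail_of_arc_mem hO' (by rw [Sym2.eq_swap]; exact edge_mem_cycEdges b i) rfl
    have h2 : isTail c z :=
      tail_of_arc_mem hO' (by rw [Sym2.eq_swap]; exact hec) hz
    exact ((tail_xor J (hz.symm) hne).mp h1) h2

/-- Alignment rigidity: two parametrisations of the same cycle agreeing on a
directed base edge agree everywhere. -/
lemma align {b c : S.AC} (hE : cycEdges b = cycEdges c) {p : ZMod (2*S.r)}
    (h0 : b.f 0 = c.f p) (h1 : b.f 1 = c.f (p+1)) (hr2 : 2 ≤ S.r) :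
    ∀ i, b.f i = c.f (p + i) := by
  haveI := S.nz2r
  have key : ∀ m : ℕ, b.f (m : ZMod (2*S.r)) = c.f (p + m) ∧
      b.f ((m+1 : ℕ) : ZMod (2*S.r)) = c.f (p + ((m+1 : ℕ) : ZMod (2*S.r))) := by
    intro m
    induction m with
    | zero =>
      constructor
      · simpa using h0
      · push_cast
        simpa using h1
    | succ m ih =>
      refine ⟨ih.2, ?_⟩
      have hedge : s(b.f ((m+1:ℕ) : ZMod (2*S.r)), b.f ((m+2:ℕ) : ZMod (2*S.r))) ∈ cycEdges c := by
        rw [← hE]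
        have := edge_mem_cycEdges b ((m+1:ℕ) : ZMod (2*S.r))
        rw [show ((m+1:ℕ) : ZMod (2*S.r)) + 1 = ((m+2:ℕ) : ZMod (2*S.r)) from by push_cast; ring] at this
        exact this
      rw [ih.2] at hedge
      rcases next_of_edge hedge with h | h
      · rw [h]
        congr 1
        push_cast
        ring
      · exfalso
        have hm : b.f ((m+2:ℕ) : ZMod (2*S.r)) = b.f ((m:ℕ) : ZMod (2*S.r)) := by
          rw [h, show p + ((m+1:ℕ) : ZMod (2*S.r)) - 1 = p + m from by push_cast; ring]
          exact ih.1.symm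
        have h2 : ((m+2:ℕ) : ZMod (2*S.r)) = ((m:ℕ) : ZMod (2*S.r)) := b.inj hm
        have h3 : (2 : ZMod (2*S.r)) = 0 := by
          push_cast at h2
          linear_combination h2
        exact two_ne_zero2r hr2 h3
  intro i
  have hv : ((i.val : ℕ) : ZMod (2*S.r)) = i := by simp [ZMod.natCast_val, ZMod.cast_id]
  have := (key i.val).1
  rw [hv] at this
  exact this

/-- Any two parametrisations of the same cycle differ by a shift or a reflected shift. -/
lemma param_rel {b c : S.AC} (hE : cycEdges b = cycEdges c) (hr2 : 2 ≤ S.r) :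
    ∃ p, (∀ i, b.f i = c.f (p + i)) ∨ (∀ i, b.f i = c.f (p - i)) := by
  have hb0 : b.f 0 ∈ cycVerts c := by
    rw [← suppOf_cycEdges, ← hE, suppOf_cycEdges]
    exact f_mem_cycVerts b 0
  obtain ⟨p, hp⟩ := hb0
  have hedge : s(c.f p, b.f 1) ∈ cycEdges c := by
    rw [hp, ← hE]
    have := edge_mem_cycEdges b 0
    rw [zero_add] at this
    exact this
  rcases next_of_edge hedge with h | h
  · exact ⟨p, Or.inl (align hE hp.symm h hr2)⟩
  · refine ⟨p, Or.inr ?_⟩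
    have hErev : cycEdges b = cycEdges (revC c) := by rw [cycEdges_revC]; exact hE
    have h0' : b.f 0 = (revC c).f (-p) := by rw [revC_f, neg_neg]; exact hp.symm
    have h1' : b.f 1 = (revC c).f (-p + 1) := by
      rw [revC_f, show -(-p+1) = p - 1 from by ring]; exact h
    have := align hErev h0' h1' hr2
    intro i
    rw [this i, revC_f]
    congr 1
    ring
  
end Setup


namespace Setup

variable {V : Type*} {S : Setup V}

lemma double_zero_val {x : ZMod (2*S.r)} (h : x + x = 0) : x.val = 0 ∨ x.val = S.r := by
  haveI := S.nz2r
  have hlt := ZMod.val_lt x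
  have hx : ((x.val : ℕ) : ZMod (2*S.r)) = x := by simp [ZMod.natCast_val, ZMod.cast_id]
  have h2 : ((x.val + x.val : ℕ) : ZMod (2*S.r)) = 0 := by push_cast; rw [hx]; exact h
  rw [ZMod.natCast_eq_zero_iff] at h2
  obtain ⟨k, hk⟩ := h2
  have hr := S.r_pos
  rcases k with _ | _ | k
  · omega
  · omega
  · exfalso
    have hexp : 2*S.r*(k+1+1) = 2*S.r*k + 2*S.r + 2*S.r := by ring
    omega

/-- An element of `G` fixing all vertices of `d` and acting as the non-trivial
reflection `i ↦ -i` on `c` is impossible when the cycles intersect in ≥ 3 vertices. -/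
lemma refl_fix_contra (h3 : 3 ≤ S.att) {c d : S.AC} (hne : cycEdges c ≠ cycEdges d)
    (hbase : c.f 0 = d.f 0) {g : S.Γ ≃g S.Γ}
    (hgc : ∀ i, g (c.f i) = c.f (-i)) (hgd : ∀ j, g (d.f j) = d.f j) : False := by
  haveI := S.nz2r
  have hA : (cycVerts c ∩ cycVerts d).ncard = S.att := by
    apply S.att_eq
    exact ⟨c, d, hne, ⟨c.f 0, f_mem_cycVerts c 0, hbase ▸ f_mem_cycVerts d 0⟩, rfl⟩
  have h3' : 3 ≤ (cycVerts c ∩ cycVerts d).ncard := by omega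
  obtain ⟨t, ht, htc⟩ := Set.exists_subset_card_eq h3'
  obtain ⟨v₁, v₂, v₃, h12, h13, h23, rfl⟩ := Set.ncard_eq_three.mp htc
  have hfix : ∀ v ∈ cycVerts c ∩ cycVerts d, ∃ x : ZMod (2*S.r), c.f x = v ∧ (x.val = 0 ∨ x.val = S.r) := by
    rintro v ⟨⟨x, rfl⟩, hvd⟩
    obtain ⟨y, hy⟩ := hvd
    have : g (c.f x) = c.f x := by rw [← hy, hgd]
    rw [hgc] at this
    have hxx : -x = x := c.inj this
    refine ⟨x, rfl, double_zero_val ?_⟩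
    nth_rewrite 1 [← hxx]
    ring
  obtain ⟨x₁, he₁, hv₁⟩ := hfix v₁ (ht (by simp))
  obtain ⟨x₂, he₂, hv₂⟩ := hfix v₂ (ht (by simp))
  obtain ⟨x₃, he₃, hv₃⟩ := hfix v₃ (ht (by simp))
  have hx12 : x₁ ≠ x₂ := fun h => h12 (by rw [← he₁, ← he₂, h])
  have hx13 : x₁ ≠ x₃ := fun h => h13 (by rw [← he₁, ← he₃, h])
  have hx23 : x₂ ≠ x₃ := fun h => h23 (by rw [← he₂, ← he₃, h])
  have hv12 : x₁.val ≠ x₂.val := fun h => hx12 (ZMod.val_injective _ h)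
  have hv13 : x₁.val ≠ x₃.val := fun h => hx13 (ZMod.val_injective _ h)
  have hv23 : x₂.val ≠ x₃.val := fun h => hx23 (ZMod.val_injective _ h)
  omega

/-- Through every common vertex of two distinct alternating cycles there is an
automorphism in `G` reflecting both cycles through that vertex. -/
lemma refl_exists (J : JumpData S) (hr2 : 2 ≤ S.r) (h3 : 3 ≤ S.att) {c d : S.AC}
    (hne : cycEdges c ≠ cycEdges d) (hbase : c.f 0 = d.f 0) :
    ∃ g : S.Γ ≃g S.Γ, g ∈ S.G ∧ (∀ i, g (c.f i) = c.f (-i)) ∧ (∀ j, g (d.f j) = d.f (-j)) := by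
  haveI := S.nz2r
  -- construct g with g (c.f 0) = c.f 0 and g (c.f 1) = c.f (-1)
  have harc : ∃ g : S.Γ ≃g S.Γ, g ∈ S.G ∧ g (c.f 0) = c.f 0 ∧ g (c.f 1) = c.f (-1) := by
    by_cases ht : isTail c 0
    · have h1 : S.O (c.f 0) (c.f 1) := by
        have h1' : S.O (c.f 0) (c.f (0+1)) := ht
        rwa [zero_add] at h1'
      have h2 : S.O (c.f 0) (c.f (-1)) := by
        have := (isTail_iff_back c 0).mp ht
        rwa [zero_sub] at this
      obtain ⟨g, hg, hg1, hg2⟩ := S.O_orbit h1 h2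
      exact ⟨g, hg, hg1, hg2⟩
    · have h1 : S.O (c.f 1) (c.f 0) := by
        have hadj := c.adj 0
        rw [zero_add] at hadj
        have : ¬ S.O (c.f 0) (c.f 1) := by
          intro h
          exact ht (by rw [isTail, zero_add]; exact h)
        by_contra h
        exact this ((S.O_choice hadj).mpr h)
      have h2 : S.O (c.f (-1)) (c.f 0) := by
        have hback : ¬ S.O (c.f 0) (c.f (0-1)) := fun h => ht ((isTail_iff_back c 0).mpr h)
        rw [zero_sub] at hback
        have hadj : S.Γ.Adj (c.f (-1)) (c.f 0) := by
          have := adj_back c 0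
          rw [zero_sub] at this
          exact this.symm
        by_contra h
        exact hback ((S.O_choice hadj.symm).mpr h)
      obtain ⟨g, hg, hg1, hg2⟩ := S.O_orbit h1 h2
      exact ⟨g, hg, hg2, hg1⟩
  obtain ⟨g, hg, hg0, hg1⟩ := harc
  -- g reflects c
  set b := mapC g hg c with hb
  have hEb : cycEdges b = cycEdges c := by
    apply edge_unique J (e := s(c.f 0, c.f (-1)))
    · have := edge_mem_cycEdges b 0
      rw [show b.f 0 = c.f 0 from by rw [hb, mapC_f]; exact hg0,
        show b.f (0+1) = c.f (-1) from by rw [hb, mapC_f, zero_add]; exact hg1] at this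
      exact this
    · have := edge_mem_cycEdges c (-1)
      rw [show (-1 : ZMod (2*S.r)) + 1 = 0 from by ring, Sym2.eq_swap] at this
      exact this
  have hgc : ∀ i, g (c.f i) = c.f (-i) := by
    have hErev : cycEdges b = cycEdges (revC c) := by rw [cycEdges_revC]; exact hEb
    have h0' : b.f 0 = (revC c).f 0 := by
      show g (c.f 0) = c.f (-0)
      rw [neg_zero]; exact hg0
    have h1' : b.f 1 = (revC c).f (0+1) := by
      show g (c.f 1) = c.f (-(0+1))
      rw [show -((0:ZMod (2*S.r))+1) = -1 from by ring]; exact hg1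
    have halign := align hErev (p := 0) h0' h1' hr2
    intro i
    have hi := halign i
    rw [zero_add] at hi
    exact hi
  -- g fixes d setwise
  set b' := mapC g hg d with hb'
  have hb'0 : b'.f 0 = d.f 0 := by
    rw [hb', mapC_f, ← hbase, hg0, hbase]
  have hne' : cycEdges b' ≠ cycEdges c := by
    intro hcon
    have h1 : Sym2.map (g : V → V) '' cycEdges d = cycEdges c := by
      rw [← cycEdges_mapC g hg d]; exact hcon
    have h2 : Sym2.map (g : V → V) '' cycEdges c = cycEdges c := by
      rw [← cycEdges_mapC g hg c]; exact hEb
    have hinj : Function.Injective (Sym2.map (g : V → V)) :=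
      Sym2.map.injective g.toEquiv.injective
    have := Set.image_injective.mpr hinj (h1.trans h2.symm)
    exact hne this.symm
  have hEb' : cycEdges b' = cycEdges d := by
    rcases two_of_three (hbase ▸ f_mem_cycVerts c 0) (f_mem_cycVerts d 0)
      (hb'0 ▸ f_mem_cycVerts b' 0) hne with h | h
    · exact absurd h hne'
    · exact h
  -- parametrise b' against d
  have hedge : s(d.f 0, g (d.f 1)) ∈ cycEdges d := by
    rw [← hEb']
    have := edge_mem_cycEdges b' 0
    rw [hb'0, show b'.f (0+1) = g (d.f 1) from by rw [hb', mapC_f, zero_add]] at this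
    exact this
  rcases next_of_edge hedge with h | h
  · -- g is the identity on d : contradiction
    exfalso
    have h0' : b'.f 0 = d.f 0 := hb'0
    have h1' : b'.f 1 = d.f (0 + 1) := by
      show g (d.f 1) = d.f (0+1)
      rw [zero_add] at h ⊢
      exact h
    have halign := align hEb' (p := 0) h0' h1' hr2
    refine refl_fix_contra h3 hne hbase hgc (fun j => ?_)
    have hj := halign j
    rw [zero_add] at hj
    exact hj
  · -- g reflects d
    refine ⟨g, hg, hgc, ?_⟩
    have hErev : cycEdges b' = cycEdges (revC d) := by rw [cycEdges_revC]; exact hEb'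
    have h0' : b'.f 0 = (revC d).f 0 := by
      show b'.f 0 = d.f (-0)
      rw [neg_zero]; exact hb'0
    have h1' : b'.f 1 = (revC d).f (0 + 1) := by
      show g (d.f 1) = d.f (-(0+1))
      rw [show -((0:ZMod (2*S.r))+1) = 0 - 1 from by ring]
      exact h
    have halign := align hErev (p := 0) h0' h1' hr2
    intro j
    have hj := halign j
    rw [zero_add] at hj
    exact hj

end Setup


namespace Setup

variable {V : Type*} {S : Setup V}

/-- Solvability of linear congruences in `ZMod`. -/
lemma exists_mul_modeq (a n t : ℕ) (hn : 0 < n) (h : Nat.gcd a n ∣ t) :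
    ∃ m : ℕ, ((a * m : ℕ) : ZMod n) = ((t : ℕ) : ZMod n) := by
  obtain ⟨s, hs⟩ := h
  set A : ℤ := Nat.gcdA a n with hA
  set B : ℤ := Nat.gcdB a n with hB
  have hbez : (Nat.gcd a n : ℤ) = a * A + n * B := Nat.gcd_eq_gcd_ab a n
  have hnz : (n : ℤ) ≠ 0 := by exact_mod_cast hn.ne'
  set m : ℤ := (A * s) % n with hm
  have hm0 : 0 ≤ m := Int.emod_nonneg _ hnz
  refine ⟨m.toNat, ?_⟩
  rw [ZMod.natCast_eq_natCast_iff]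
  rw [Nat.modEq_iff_dvd]
  have hmz : (m.toNat : ℤ) = A * s - n * ((A * s) / n) := by
    rw [Int.toNat_of_nonneg hm0, hm, Int.emod_def]
  refine ⟨B * s + a * ((A * s) / n), ?_⟩
  have hts : (t : ℤ) = (Nat.gcd a n : ℤ) * s := by exact_mod_cast congrArg (Nat.cast : ℕ → ℤ) hs
  push_cast
  rw [hmz, hts]
  linear_combination (s : ℤ) * hbez

/-- A set containing `0`, closed under the reflections through each of its points,
of size `att`, consists precisely of the multiples of `ℓ`. -/
lemma refl_closed_classify (J : JumpData S) (h3 : 3 ≤ S.att) (I : Set (ZMod (2*S.r)))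
    (h0 : (0 : ZMod (2*S.r)) ∈ I) (hrc : ∀ p ∈ I, ∀ x ∈ I, 2*p - x ∈ I)
    (hcard : I.ncard = S.att) : ∀ x : ZMod (2*S.r), x ∈ I ↔ (J.ell ∣ x.val) := by
  haveI := S.nz2r
  have hn : 0 < 2*S.r := by have := S.r_pos; omega
  -- a nonzero element of I
  have hex : ∃ x ∈ I, x ≠ 0 := by
    by_contra hcon
    push_neg at hcon
    have hsub : I ⊆ {(0 : ZMod (2*S.r))} := fun x hx => by
      rw [Set.mem_singleton_iff]; exact hcon x hx
    have := Set.ncard_le_ncard hsub (Set.finite_singleton 0)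
    rw [Set.ncard_singleton] at this
    omega
  obtain ⟨x₀, hx₀I, hx₀⟩ := hex
  set MSet := {m : ℕ | 0 < m ∧ ((m : ℕ) : ZMod (2*S.r)) ∈ I} with hMSet
  have hcastval : ∀ x : ZMod (2*S.r), ((x.val : ℕ) : ZMod (2*S.r)) = x := by
    intro x; simp [ZMod.natCast_val, ZMod.cast_id]
  have hMne : MSet.Nonempty := by
    refine ⟨x₀.val, ?_, ?_⟩
    · exact Nat.pos_of_ne_zero (fun h => hx₀ (by rwa [ZMod.val_eq_zero] at h))
    · rw [hcastval]; exact hx₀I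
  set e := sInf MSet with he
  have heM : e ∈ MSet := Nat.sInf_mem hMne
  have hepos : 0 < e := heM.1
  have heI : ((e : ℕ) : ZMod (2*S.r)) ∈ I := heM.2
  have hmin : ∀ m, 0 < m → ((m : ℕ) : ZMod (2*S.r)) ∈ I → e ≤ m :=
    fun m h1 h2 => Nat.sInf_le ⟨h1, h2⟩
  -- all multiples of e lie in I
  have hmul : ∀ m : ℕ, ((m * e : ℕ) : ZMod (2*S.r)) ∈ I := by
    have key : ∀ m : ℕ, ((m * e : ℕ) : ZMod (2*S.r)) ∈ I ∧
        (((m+1) * e : ℕ) : ZMod (2*S.r)) ∈ I := by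
      intro m
      induction m with
      | zero => exact ⟨by simpa using h0, by simpa using heI⟩
      | succ m ih =>
        refine ⟨ih.2, ?_⟩
        have hstep := hrc _ ih.2 _ ih.1
        have heq : 2*((((m+1)*e : ℕ)) : ZMod (2*S.r)) - ((m*e : ℕ) : ZMod (2*S.r))
            = (((m+1+1)*e : ℕ) : ZMod (2*S.r)) := by push_cast; ring
        rw [heq] at hstep
        exact hstep
    exact fun m => (key m).1
  -- e divides 2r
  have hdvd : e ∣ 2*S.r := by
    set g := Nat.gcd e (2*S.r) with hg
    have hgpos : 0 < g := Nat.gcd_pos_of_pos_right _ hn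
    obtain ⟨m, hm⟩ := exists_mul_modeq e (2*S.r) g hn dvd_rfl
    have hgI : ((g : ℕ) : ZMod (2*S.r)) ∈ I := by
      have hx : ((e * m : ℕ) : ZMod (2*S.r)) ∈ I := by rw [mul_comm e m]; exact hmul m
      rwa [hm] at hx
    have h1 : e ≤ g := hmin g hgpos hgI
    have h2 : g ≤ e := Nat.le_of_dvd hepos (Nat.gcd_dvd_left _ _)
    have : g = e := le_antisymm h2 h1
    rw [← this]
    exact Nat.gcd_dvd_right _ _
  -- helper : casts of reachable values are in I
  have hstep : ∀ T : ℕ, (∃ m, ((2*e*m : ℕ) : ZMod (2*S.r)) = ((T : ℕ) : ZMod (2*S.r))) →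
      ∀ x ∈ I, (((T : ℕ) : ZMod (2*S.r)) - x) ∈ I := by
    rintro T ⟨m, hm⟩ x hx
    have h1 := hrc _ (hmul m) _ hx
    have h2 : 2*((m*e : ℕ) : ZMod (2*S.r)) = ((2*e*m : ℕ) : ZMod (2*S.r)) := by push_cast; ring
    rw [h2, hm] at h1
    exact h1
  -- I consists of multiples of e
  have hsub : ∀ x ∈ I, e ∣ x.val := by
    intro x hxI
    by_contra hnd
    set w := x.val % e with hw
    have hw0 : 0 < w := Nat.pos_of_ne_zero (fun h => hnd (Nat.dvd_of_mod_eq_zero h))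
    have hwe : w < e := Nat.mod_lt _ hepos
    set q := x.val / e with hq
    have hqe : x.val = e*q + w := by rw [hq, hw]; exact (Nat.div_add_mod x.val e).symm
    have hd2 : Nat.gcd (2*e) (2*S.r) = e * Nat.gcd 2 ((2*S.r)/e) := by
      conv_lhs => rw [show 2*e = e*2 from mul_comm _ _, show 2*S.r = e * ((2*S.r)/e) from (Nat.mul_div_cancel' hdvd).symm]
      exact Nat.gcd_mul_left e 2 ((2*S.r)/e)
    have hG2 : Nat.gcd 2 ((2*S.r)/e) = 1 ∨ Nat.gcd 2 ((2*S.r)/e) = 2 := by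
      have h2' : Nat.gcd 2 ((2*S.r)/e) ∣ 2 := Nat.gcd_dvd_left _ _
      exact (Nat.dvd_prime Nat.prime_two).mp h2'
    -- helper to produce a small positive element of I and contradict minimality
    have hsmall : ∀ T : ℕ, Nat.gcd (2*e) (2*S.r) ∣ T → x.val ≤ T →
        (((T - x.val : ℕ) : ZMod (2*S.r))) ∈ I := by
      intro T hT hle
      obtain ⟨m, hm⟩ := exists_mul_modeq (2*e) (2*S.r) T hn hT
      have := hstep T ⟨m, hm⟩ x hxI
      have heq : ((T : ℕ) : ZMod (2*S.r)) - x = ((T - x.val : ℕ) : ZMod (2*S.r)) := by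
        have : ((T - x.val : ℕ) : ZMod (2*S.r)) + ((x.val : ℕ) : ZMod (2*S.r))
            = ((T : ℕ) : ZMod (2*S.r)) := by
          rw [← Nat.cast_add, Nat.sub_add_cancel hle]
        rw [← this, hcastval]
        ring
      rwa [heq] at this
    rcases hG2 with hG | hG
    · -- d2 = e ; target T = e*(q+1)
      have hTdvd : Nat.gcd (2*e) (2*S.r) ∣ e*(q+1) := by
        rw [hd2, hG, mul_one]; exact Dvd.intro _ rfl
      have hexp : e*(q+1) = e*q + e := by ring
      have hle : x.val ≤ e*(q+1) := by
        rw [hqe, hexp]; exact Nat.add_le_add_left (le_of_lt hwe) _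
      have hmem := hsmall (e*(q+1)) hTdvd hle
      have hval : e*(q+1) - x.val = e - w := by
        rw [hqe, hexp]; exact Nat.add_sub_add_left _ _ _
      rw [hval] at hmem
      have := hmin (e - w) (by omega) hmem
      omega
    · -- d2 = 2e
      rcases Nat.even_or_odd q with hqeven | hqodd
      · -- q even : target T = e*(q+2), get cast (2e - w) ∈ I then reflect by e
        obtain ⟨q2, hq2⟩ := hqeven
        have hTdvd : Nat.gcd (2*e) (2*S.r) ∣ e*(q+2) := by
          rw [hd2, hG]
          refine ⟨(q2+1), ?_⟩
          rw [hq2]; ring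
        have hexp : e*(q+2) = e*q + 2*e := by ring
        have hle : x.val ≤ e*(q+2) := by
          rw [hqe, hexp]; exact Nat.add_le_add_left (by omega) _
        have hmem := hsmall (e*(q+2)) hTdvd hle
        have hval : e*(q+2) - x.val = 2*e - w := by
          rw [hqe, hexp]; exact Nat.add_sub_add_left _ _ _
        rw [hval] at hmem
        -- reflect : 2 * (cast e) - cast (2e - w) = cast w
        have hrefl := hrc _ heI _ hmem
        have heq : 2*((e : ℕ) : ZMod (2*S.r)) - ((2*e - w : ℕ) : ZMod (2*S.r))
            = ((w : ℕ) : ZMod (2*S.r)) := by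
          have hle2 : w ≤ 2*e := by omega
          have : ((2*e - w : ℕ) : ZMod (2*S.r)) + ((w : ℕ) : ZMod (2*S.r))
              = ((2*e : ℕ) : ZMod (2*S.r)) := by
            rw [← Nat.cast_add, Nat.sub_add_cancel hle2]
          have h2e : ((2*e : ℕ) : ZMod (2*S.r)) = 2*((e : ℕ) : ZMod (2*S.r)) := by push_cast; ring
          rw [h2e] at this
          linear_combination -this
        rw [heq] at hrefl
        have := hmin w hw0 hrefl
        omega
      · -- q odd : q+1 even, target T = e*(q+1)
        obtain ⟨q2, hq2⟩ := hqodd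
        have hTdvd : Nat.gcd (2*e) (2*S.r) ∣ e*(q+1) := by
          rw [hd2, hG]
          refine ⟨(q2+1), ?_⟩
          rw [hq2]; ring
        have hexp : e*(q+1) = e*q + e := by ring
        have hle : x.val ≤ e*(q+1) := by
          rw [hqe, hexp]; exact Nat.add_le_add_left (le_of_lt hwe) _
        have hmem := hsmall (e*(q+1)) hTdvd hle
        have hval : e*(q+1) - x.val = e - w := by
          rw [hqe, hexp]; exact Nat.add_sub_add_left _ _ _
        rw [hval] at hmem
        have := hmin (e - w) (by omega) hmem
        omega
  -- multiples of e lie in I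
  have hsup : ∀ x : ZMod (2*S.r), e ∣ x.val → x ∈ I := by
    rintro x ⟨k, hk⟩
    have hx : x = ((k * e : ℕ) : ZMod (2*S.r)) := by
      conv_lhs => rw [← hcastval x, hk, mul_comm e k]
    rw [hx]
    exact hmul k
  -- counting : e = ℓ
  have hinj : Function.Injective (fun m : Fin ((2*S.r)/e) => ((m.val * e : ℕ) : ZMod (2*S.r))) := by
    intro m m' hmm
    simp only at hmm
    have hlt : ∀ k : Fin ((2*S.r)/e), k.val * e < 2*S.r := by
      intro k
      have := k.isLt
      calc k.val * e < ((2*S.r)/e) * e := by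
            exact (Nat.mul_lt_mul_right hepos).mpr this
        _ = 2*S.r := Nat.div_mul_cancel hdvd
    have h1 := ZMod.val_cast_of_lt (hlt m)
    have h2 := ZMod.val_cast_of_lt (hlt m')
    have : m.val * e = m'.val * e := by rw [← h1, ← h2, hmm]
    exact Fin.ext (Nat.eq_of_mul_eq_mul_right hepos this)
  have hIeq : I = Set.range (fun m : Fin ((2*S.r)/e) => ((m.val * e : ℕ) : ZMod (2*S.r))) := by
    ext x
    constructor
    · intro hx
      obtain ⟨k, hk⟩ := hsub x hx
      have hklt : k < (2*S.r)/e := by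
        have hvlt : x.val < 2*S.r := ZMod.val_lt x
        rw [hk] at hvlt
        exact Nat.lt_of_mul_lt_mul_left (by rwa [← Nat.mul_div_cancel' hdvd] at hvlt)
      refine ⟨⟨k, hklt⟩, ?_⟩
      show ((k * e : ℕ) : ZMod (2*S.r)) = x
      conv_rhs => rw [← hcastval x, hk, mul_comm e k]
    · rintro ⟨m, rfl⟩
      exact hmul m.val
  have hcount : S.att = (2*S.r)/e := by
    rw [← hcard, hIeq, ← Set.image_univ, Set.ncard_image_of_injective _ hinj, Set.ncard_univ]
    simp
  have hel : e = J.ell := by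
    have h1 : S.att * J.ell = 2*S.r := J.hell
    have h3' : (2*S.r)/e * e = 2*S.r := Nat.div_mul_cancel hdvd
    have ha : 0 < S.att := S.att_pos
    have : S.att * e = S.att * J.ell := by rw [h1, ← h3', ← hcount]
    exact Nat.eq_of_mul_eq_mul_left ha this
  intro x
  rw [← hel]
  exact ⟨hsub x, hsup x⟩

/-- **Even spacing of attachment sets**: the positions on `c` of the intersection
with another cycle `d` through `c.f 0` are exactly the multiples of `ℓ`. -/
lemma spacing (J : JumpData S) (hr2 : 2 ≤ S.r) (h3 : 3 ≤ S.att) {c d : S.AC}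
    (hne : cycEdges c ≠ cycEdges d) (hbase : c.f 0 = d.f 0) :
    ∀ x : ZMod (2*S.r), c.f x ∈ cycVerts d ↔ (J.ell ∣ x.val) := by
  set I := {x : ZMod (2*S.r) | c.f x ∈ cycVerts d} with hI
  have h0 : (0 : ZMod (2*S.r)) ∈ I := by
    show c.f 0 ∈ cycVerts d
    rw [hbase]; exact f_mem_cycVerts d 0
  have hrc : ∀ p ∈ I, ∀ x ∈ I, 2*p - x ∈ I := by
    intro p hp x hx
    obtain ⟨p', hp'⟩ := hp
    have hbase' : (shiftC c p).f 0 = (shiftC d p').f 0 := by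
      simp only [shiftC_f, add_zero]
      exact hp'.symm
    have hne' : cycEdges (shiftC c p) ≠ cycEdges (shiftC d p') := by
      rw [cycEdges_shiftC, cycEdges_shiftC]; exact hne
    obtain ⟨g, hg, hgc, hgd⟩ := refl_exists J hr2 h3 hne' hbase'
    have hgc' : ∀ y, g (c.f y) = c.f (2*p - y) := by
      intro y
      have := hgc (y - p)
      simp only [shiftC_f] at this
      rw [show p + (y - p) = y from by ring, show p + -(y - p) = 2*p - y from by ring] at this
      exact this
    have hgd' : ∀ y, g (d.f y) = d.f (2*p' - y) := by
      intro y
      have := hgd (y - p')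
      simp only [shiftC_f] at this
      rw [show p' + (y - p') = y from by ring, show p' + -(y - p') = 2*p' - y from by ring] at this
      exact this
    obtain ⟨y, hy⟩ := hx
    refine ⟨2*p' - y, ?_⟩
    show d.f (2*p' - y) = c.f (2*p - x)
    rw [← hgd' y, hy, hgc' x]
  have hcard : I.ncard = S.att := by
    have hA : (cycVerts c ∩ cycVerts d).ncard = S.att := by
      apply S.att_eq
      exact ⟨c, d, hne, ⟨c.f 0, f_mem_cycVerts c 0, hbase ▸ f_mem_cycVerts d 0⟩, rfl⟩
    have himg : c.f '' I = cycVerts c ∩ cycVerts d := by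
      ext v
      constructor
      · rintro ⟨x, hx, rfl⟩
        exact ⟨f_mem_cycVerts c x, hx⟩
      · rintro ⟨⟨x, rfl⟩, hvd⟩
        exact ⟨x, hvd, rfl⟩
    rw [← hA, ← himg, Set.ncard_image_of_injective _ c.inj]
  exact refl_closed_classify J h3 I h0 hrc hcard

end Setup


namespace Setup

variable {V : Type*} {S : Setup V}

lemma ell_pos (J : JumpData S) : 0 < J.ell := by
  have h := J.hell
  have := S.r_pos
  by_contra hc
  push_neg at hc
  interval_cases he : J.ell <;> omega

lemma ell_odd (J : JumpData S) (hdvd : ¬ S.att ∣ S.r) : ¬ (2 ∣ J.ell) := by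
  rintro ⟨k, hk⟩
  apply hdvd
  refine ⟨k, ?_⟩
  have h := J.hell
  have h2 : 2*(S.att*k) = 2*S.r := by rw [← h, hk]; ring
  omega

lemma ell_ge3 (J : JumpData S) (har : S.att < S.r) (hdvd : ¬ S.att ∣ S.r) : 3 ≤ J.ell := by
  have h := J.hell
  have hodd := ell_odd J hdvd
  have hpos := ell_pos J
  by_contra hc
  push_neg at hc
  have h1 : J.ell = 1 ∨ J.ell = 2 := by omega
  rcases h1 with h1 | h1
  · rw [h1, mul_one] at h
    omega
  · exact hodd ⟨1, by omega⟩

lemma ell_dvd_2r (J : JumpData S) : J.ell ∣ 2*S.r := ⟨S.att, by rw [← J.hell]; ring⟩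

lemma dvd_val_sub (J : JumpData S) {x y : ZMod (2*S.r)} (hx : J.ell ∣ x.val)
    (hy : J.ell ∣ y.val) : J.ell ∣ (x - y).val := by
  haveI := S.nz2r
  have hyle : y.val ≤ 2*S.r := le_of_lt (ZMod.val_lt y)
  have hcastval : ∀ z : ZMod (2*S.r), ((z.val : ℕ) : ZMod (2*S.r)) = z := by
    intro z; simp [ZMod.natCast_val, ZMod.cast_id]
  have hxy : x - y = ((x.val + (2*S.r - y.val) : ℕ) : ZMod (2*S.r)) := by
    have h2r : ((2*S.r : ℕ) : ZMod (2*S.r)) = 0 := ZMod.natCast_self _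
    rw [Nat.cast_add, Nat.cast_sub hyle, h2r, hcastval x, hcastval y]
    ring
  rw [hxy, ZMod.val_natCast]
  rw [Nat.dvd_mod_iff (ell_dvd_2r J)]
  exact Nat.dvd_add hx (Nat.dvd_sub (ell_dvd_2r J) hy)

lemma kernel_fix_edges {γ : S.Γ ≃g S.Γ} (hγ : γ ∈ S.altKernel) (c : S.AC) :
    cycEdges (mapC γ hγ.1 c) = cycEdges c := by
  rw [cycEdges_mapC]
  exact hγ.2 _ (isAlt_cycEdges c)

lemma kernel_fix_verts {γ : S.Γ ≃g S.Γ} (hγ : γ ∈ S.altKernel) (c : S.AC) {v : V}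
    (hv : v ∈ cycVerts c) : γ v ∈ cycVerts c := by
  obtain ⟨i, rfl⟩ := hv
  have h1 : (mapC γ hγ.1 c).f i ∈ cycVerts (mapC γ hγ.1 c) := f_mem_cycVerts _ i
  have h2 : cycVerts (mapC γ hγ.1 c) = cycVerts c := by
    rw [← suppOf_cycEdges, kernel_fix_edges hγ, suppOf_cycEdges]
  rw [h2] at h1
  exact h1

/-- Spacing at an arbitrary basepoint: the other cycle through `c.f x` meets `c`
exactly at the positions `x + (multiple of ℓ)`. -/
lemma spacing_at (J : JumpData S) (hr2 : 2 ≤ S.r) (h3 : 3 ≤ S.att) (c : S.AC)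
    (x : ZMod (2*S.r)) :
    ∃ d : S.AC, cycEdges d ≠ cycEdges c ∧ c.f x ∈ cycVerts d ∧
      (∀ z : ZMod (2*S.r), c.f (x + z) ∈ cycVerts d ↔ (J.ell ∣ z.val)) := by
  obtain ⟨d, hd, hdne⟩ := other_cycle c x
  obtain ⟨y, hy⟩ := hd
  have hbase : (shiftC c x).f 0 = (shiftC d y).f 0 := by
    simp only [shiftC_f, add_zero]
    exact hy.symm
  have hne' : cycEdges (shiftC c x) ≠ cycEdges (shiftC d y) := by
    rw [cycEdges_shiftC, cycEdges_shiftC]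
    exact fun h => hdne (h.symm)
  have hspac := spacing J hr2 h3 hne' hbase
  refine ⟨d, hdne, ⟨y, hy⟩, fun z => ?_⟩
  have := hspac z
  simp only [shiftC_f] at this
  rw [← this]
  constructor
  · rintro ⟨w, hw⟩
    exact ⟨w - y, by simp only [shiftC_f]; rw [show y + (w - y) = w from by ring]; exact hw⟩
  · rintro ⟨w, hw⟩
    simp only [shiftC_f] at hw
    exact ⟨y + w, hw⟩

/-- A nontrivial kernel element acts on each cycle as a rotation by a multiple of `ℓ`. -/
lemma kernel_rot (J : JumpData S) (hr2 : 2 ≤ S.r) (h3 : 3 ≤ S.att) (har : S.att < S.r)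
    (hdvd : ¬ S.att ∣ S.r) {γ : S.Γ ≃g S.Γ} (hγ : γ ∈ S.altKernel) (c : S.AC) :
    ∃ t : ZMod (2*S.r), (∀ i, γ (c.f i) = c.f (i + t)) ∧ J.ell ∣ t.val := by
  haveI := S.nz2r
  obtain ⟨p, hrot | hrefl⟩ := param_rel (kernel_fix_edges hγ c) hr2
  · refine ⟨p, fun i => ?_, ?_⟩
    · have := hrot i
      rw [mapC_f] at this
      rw [this, add_comm]
    · obtain ⟨d, hdne, hd0, hspac⟩ := spacing_at J hr2 h3 c 0
      have h1 : γ (c.f 0) ∈ cycVerts d := kernel_fix_verts hγ d hd0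
      have h2 : γ (c.f 0) = c.f (0 + p) := by
        have := hrot 0
        rw [mapC_f, add_zero] at this
        rw [this, zero_add]
      rw [h2] at h1
      exact (hspac p).mp h1
  · exfalso
    have hF : ∀ x : ZMod (2*S.r), J.ell ∣ (p - 2*x).val := by
      intro x
      obtain ⟨d, hdne, hdx, hspac⟩ := spacing_at J hr2 h3 c x
      have h1 : γ (c.f x) ∈ cycVerts d := kernel_fix_verts hγ d hdx
      have h2 : γ (c.f x) = c.f (x + (p - 2*x)) := by
        have := hrefl x
        rw [mapC_f] at this
        rw [this]
        congr 1
        ring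
      rw [h2] at h1
      exact (hspac _).mp h1
    have hd1 := hF 0
    have hd2 := hF 1
    have hsub := dvd_val_sub J hd1 hd2
    have heq : (p - 2*0) - (p - 2*1) = ((2:ℕ) : ZMod (2*S.r)) := by push_cast; ring
    rw [heq, ZMod.val_natCast] at hsub
    have h2lt : 2 % (2*S.r) = 2 := Nat.mod_eq_of_lt (by omega)
    rw [h2lt] at hsub
    have := Nat.le_of_dvd two_pos hsub
    have := ell_ge3 J har hdvd
    omega

/-- A kernel element fixing one cycle pointwise is the identity. -/
lemma kernel_id_of_fix (J : JumpData S) (hr2 : 2 ≤ S.r) (h3 : 3 ≤ S.att)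
    (har : S.att < S.r) (hdvd : ¬ S.att ∣ S.r) {γ : S.Γ ≃g S.Γ} (hγ : γ ∈ S.altKernel)
    (c₀ : S.AC) (hfix : ∀ v ∈ cycVerts c₀, γ v = v) : γ = 1 := by
  haveI := S.nz2r
  have fix_spread : ∀ (c : S.AC), (∀ v ∈ cycVerts c, γ v = v) →
      ∀ (d : S.AC) (x : ZMod (2*S.r)), c.f x ∈ cycVerts d → ∀ v ∈ cycVerts d, γ v = v := by
    intro c hc d x hxd
    by_cases hE : cycEdges d = cycEdges c
    · have hV : cycVerts d = cycVerts c := by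
        rw [← suppOf_cycEdges, hE, suppOf_cycEdges]
      intro v hv
      exact hc v (hV ▸ hv)
    · obtain ⟨t, hrot, -⟩ := kernel_rot J hr2 h3 har hdvd hγ d
      obtain ⟨y, hy⟩ := hxd
      have h1 : γ (d.f y) = d.f y := by
        rw [hy]
        exact hc _ (f_mem_cycVerts c x)
      rw [hrot y] at h1
      have ht : y + t = y := d.inj h1
      have ht0 : t = 0 := by linear_combination ht
      rintro v ⟨z, rfl⟩
      rw [hrot z, ht0, add_zero]
  set good : V → Prop := fun v => ∀ (d : S.AC) (y : ZMod (2*S.r)), d.f y = v →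
    ∀ w ∈ cycVerts d, γ w = w with hgood
  have hbase : good (c₀.f 0) := by
    intro d y hy w hw
    exact fix_spread c₀ hfix d 0 ⟨y, hy⟩ w hw
  have hstep : ∀ v w : V, S.Γ.Adj v w → good v → good w := by
    intro v w hadj hv
    obtain ⟨F, hF⟩ := edge_on_cycle J hadj
    have hvF : v ∈ cycVerts F := by
      rw [← suppOf_cycEdges]
      exact ⟨_, hF, Sym2.mem_mk_left _ _⟩
    have hwF : w ∈ cycVerts F := by
      rw [← suppOf_cycEdges]
      exact ⟨_, hF, Sym2.mem_mk_right _ _⟩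
    obtain ⟨yv, hyv⟩ := hvF
    have hFfix : ∀ u ∈ cycVerts F, γ u = u := hv F yv hyv
    intro E z hz u hu
    obtain ⟨xw, hxw⟩ := hwF
    exact fix_spread F hFfix E xw (by rw [hxw]; exact ⟨z, hz⟩) u hu
  have key : ∀ (u v : V) (w : S.Γ.Walk u v), good u → good v := by
    intro u v w
    induction w with
    | nil => exact id
    | cons hadj w ih => exact fun hu => ih (hstep _ _ hadj hu)
  have hall : ∀ v, good v := by
    intro v
    obtain ⟨wlk⟩ := S.conn.preconnected (c₀.f 0) v
    exact key _ _ wlk hbase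
  have hex : ∀ v : V, ∃ (d : S.AC) (y : ZMod (2*S.r)), d.f y = v := by
    intro v
    have h2 := S.alt_cover v
    have hne : {E : Set (Sym2 V) | IsAltEdgeSet S.Γ S.O (2*S.r) E ∧ v ∈ suppOf E}.Nonempty := by
      rcases Set.ncard_eq_two.mp h2 with ⟨a, b, hab, hset⟩
      rw [hset]
      exact ⟨a, by simp⟩
    obtain ⟨E, ⟨⟨d, hd⟩, hsupp⟩⟩ := hne
    rw [← hd, suppOf_cycEdges] at hsupp
    obtain ⟨y, hy⟩ := hsupp
    exact ⟨d, y, hy⟩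
  have hfixall : ∀ v, γ v = v := by
    intro v
    obtain ⟨d, y, hy⟩ := hex v
    exact hall v d y hy v (by rw [← hy]; exact f_mem_cycVerts d y)
  ext v
  rw [hfixall v]
  rfl

end Setup


namespace Setup

variable {V : Type*} {S : Setup V}

lemma ell_cast_val_dvd (J : JumpData S) (m : ℕ) :
    J.ell ∣ (((m * J.ell : ℕ) : ZMod (2*S.r))).val := by
  haveI := S.nz2r
  rw [ZMod.val_natCast, Nat.dvd_mod_iff (ell_dvd_2r J)]
  exact dvd_mul_left J.ell m

/-- Existence of the slope of a configuration. -/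
lemma slope_exists (J : JumpData S) (hr2 : 2 ≤ S.r) (h3 : 3 ≤ S.att) {c d : S.AC}
    (hne : cycEdges c ≠ cycEdges d) (hbase : c.f 0 = d.f 0) :
    ∃ σ : ZMod (2*S.r), d.f σ = c.f ((J.ell : ℕ) : ZMod (2*S.r)) ∧ J.ell ∣ σ.val := by
  have hmem : c.f ((J.ell : ℕ) : ZMod (2*S.r)) ∈ cycVerts d := by
    rw [spacing J hr2 h3 hne hbase]
    have := ell_cast_val_dvd J 1
    rwa [one_mul] at this
  obtain ⟨σ, hσ⟩ := hmem
  refine ⟨σ, hσ, ?_⟩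
  have hmem' : d.f σ ∈ cycVerts c := by rw [hσ]; exact f_mem_cycVerts c _
  rw [spacing J hr2 h3 (fun h => hne h.symm) hbase.symm] at hmem'
  exact hmem'

/-- Linearity of the attachment correspondence. -/
lemma slope_lin (J : JumpData S) (hr2 : 2 ≤ S.r) (h3 : 3 ≤ S.att) {c d : S.AC}
    (hne : cycEdges c ≠ cycEdges d) (hbase : c.f 0 = d.f 0) {σ : ZMod (2*S.r)}
    (hσ : d.f σ = c.f ((J.ell : ℕ) : ZMod (2*S.r))) :
    ∀ m : ℕ, d.f ((m : ZMod (2*S.r)) * σ) = c.f ((m * J.ell : ℕ) : ZMod (2*S.r)) := by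
  haveI := S.nz2r
  have key : ∀ m : ℕ,
      (d.f ((m : ZMod (2*S.r)) * σ) = c.f ((m * J.ell : ℕ) : ZMod (2*S.r))) ∧
      (d.f (((m+1 : ℕ) : ZMod (2*S.r)) * σ) = c.f (((m+1) * J.ell : ℕ) : ZMod (2*S.r))) := by
    intro m
    induction m with
    | zero =>
      constructor
      · simpa using hbase.symm
      · simpa using hσ
    | succ m ih =>
      refine ⟨ih.2, ?_⟩
      set p : ZMod (2*S.r) := (((m+1) * J.ell : ℕ) : ZMod (2*S.r)) with hp
      set p' : ZMod (2*S.r) := ((m+1 : ℕ) : ZMod (2*S.r)) * σ with hp'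
      have hbase' : (shiftC c p).f 0 = (shiftC d p').f 0 := by
        simp only [shiftC_f, add_zero]
        exact ih.2.symm
      have hne' : cycEdges (shiftC c p) ≠ cycEdges (shiftC d p') := by
        rw [cycEdges_shiftC, cycEdges_shiftC]; exact hne
      obtain ⟨g, hg, hgc, hgd⟩ := refl_exists J hr2 h3 hne' hbase'
      simp only [shiftC_f] at hgc hgd
      -- c-side
      have hc1 : g (c.f ((m * J.ell : ℕ) : ZMod (2*S.r))) =
          c.f (((m+2) * J.ell : ℕ) : ZMod (2*S.r)) := by
        have := hgc (-(((J.ell : ℕ)) : ZMod (2*S.r)))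
        rw [show p + -((J.ell : ℕ) : ZMod (2*S.r)) = ((m * J.ell : ℕ) : ZMod (2*S.r)) from by
          rw [hp]; push_cast; ring] at this
        rw [show p + - -((J.ell : ℕ) : ZMod (2*S.r)) = (((m+2) * J.ell : ℕ) : ZMod (2*S.r)) from by
          rw [hp]; push_cast; ring] at this
        exact this
      -- d-side
      have hd1 : g (d.f ((m : ZMod (2*S.r)) * σ)) =
          d.f (((m+2 : ℕ) : ZMod (2*S.r)) * σ) := by
        have := hgd (-σ)
        rw [show p' + -σ = ((m : ZMod (2*S.r))) * σ from by rw [hp']; push_cast; ring] at this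
        rw [show p' + - -σ = (((m+2) : ℕ) : ZMod (2*S.r)) * σ from by rw [hp']; push_cast; ring] at this
        exact this
      have := ih.1
      calc d.f (((m+1+1 : ℕ) : ZMod (2*S.r)) * σ)
          = d.f (((m+2 : ℕ) : ZMod (2*S.r)) * σ) := rfl
        _ = g (d.f ((m : ZMod (2*S.r)) * σ)) := hd1.symm
        _ = g (c.f ((m * J.ell : ℕ) : ZMod (2*S.r))) := by rw [ih.1]
        _ = c.f (((m+2) * J.ell : ℕ) : ZMod (2*S.r)) := hc1
        _ = c.f (((m+1+1) * J.ell : ℕ) : ZMod (2*S.r)) := rfl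
  exact fun m => (key m).1

/-- The rotation amounts of a kernel element on two intersecting cycles are
related by the slope. -/
lemma pair_rel (J : JumpData S) (hr2 : 2 ≤ S.r) (h3 : 3 ≤ S.att) {c d : S.AC}
    (hne : cycEdges c ≠ cycEdges d) (hbase : c.f 0 = d.f 0) {σ : ZMod (2*S.r)}
    (hσ : d.f σ = c.f ((J.ell : ℕ) : ZMod (2*S.r))) {γ : S.Γ ≃g S.Γ}
    {tc td : ZMod (2*S.r)} (hc : ∀ i, γ (c.f i) = c.f (i + tc))
    (hd : ∀ j, γ (d.f j) = d.f (j + td)) (mc : ℕ)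
    (hmc : tc = ((mc * J.ell : ℕ) : ZMod (2*S.r))) :
    td = ((mc : ℕ) : ZMod (2*S.r)) * σ := by
  have h1 : γ (c.f 0) = d.f (((mc : ℕ) : ZMod (2*S.r)) * σ) := by
    rw [hc 0, zero_add, hmc, slope_lin J hr2 h3 hne hbase hσ mc]
  have h2 : γ (d.f 0) = d.f td := by rw [hd 0, zero_add]
  rw [hbase] at h1
  rw [h1] at h2
  exact (d.inj h2).symm

/-- Transport: all configurations have the same slope up to sign. -/
lemma slope_transport (J : JumpData S) (hr2 : 2 ≤ S.r) (h3 : 3 ≤ S.att)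
    {c₁ d₁ c₂ d₂ : S.AC} (hne₁ : cycEdges c₁ ≠ cycEdges d₁) (hb₁ : c₁.f 0 = d₁.f 0)
    (ht₁ : isTail c₁ 0) (hne₂ : cycEdges c₂ ≠ cycEdges d₂) (hb₂ : c₂.f 0 = d₂.f 0)
    (ht₂ : isTail c₂ 0) {σ₁ σ₂ : ZMod (2*S.r)}
    (hσ₁ : d₁.f σ₁ = c₁.f ((J.ell : ℕ) : ZMod (2*S.r)))
    (hσ₂ : d₂.f σ₂ = c₂.f ((J.ell : ℕ) : ZMod (2*S.r))) :
    σ₂ = σ₁ ∨ σ₂ = -σ₁ := by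
  haveI := S.nz2r
  have harc₁ : S.O (c₁.f 0) (c₁.f 1) := by
    have h : S.O (c₁.f 0) (c₁.f (0+1)) := ht₁
    rwa [zero_add] at h
  have harc₂ : S.O (c₂.f 0) (c₂.f 1) := by
    have h : S.O (c₂.f 0) (c₂.f (0+1)) := ht₂
    rwa [zero_add] at h
  obtain ⟨g, hg, hg0, hg1⟩ := S.O_orbit harc₁ harc₂
  -- align the c sides
  set b := mapC g hg c₁ with hb
  have hEb : cycEdges b = cycEdges c₂ := by
    apply edge_unique J (e := s(c₂.f 0, c₂.f 1))
    · have := edge_mem_cycEdges b 0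
      rw [show b.f 0 = c₂.f 0 from hg0, show b.f (0+1) = c₂.f 1 from by
        rw [hb, mapC_f, zero_add]; exact hg1] at this
      exact this
    · have := edge_mem_cycEdges c₂ 0
      rw [zero_add] at this
      exact this
  have halignc : ∀ i, g (c₁.f i) = c₂.f i := by
    have := align hEb (p := 0) hg0 (by rw [zero_add]; show g (c₁.f 1) = c₂.f 1; exact hg1) hr2
    intro i
    have hi := this i
    rw [zero_add] at hi
    exact hi
  -- the d sides
  set b' := mapC g hg d₁ with hb'
  have hb'0 : b'.f 0 = d₂.f 0 := by
    show g (d₁.f 0) = d₂.f 0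
    rw [← hb₁, hg0, hb₂]
  have hne' : cycEdges b' ≠ cycEdges c₂ := by
    intro hcon
    have h1 : Sym2.map (g : V → V) '' cycEdges d₁ = cycEdges c₂ := by
      rw [← cycEdges_mapC g hg d₁]; exact hcon
    have h2 : Sym2.map (g : V → V) '' cycEdges c₁ = cycEdges c₂ := by
      rw [← cycEdges_mapC g hg c₁]; exact hEb
    have hinj : Function.Injective (Sym2.map (g : V → V)) :=
      Sym2.map.injective g.toEquiv.injective
    exact hne₁ (Set.image_injective.mpr hinj (h2.trans h1.symm))
  have hEb' : cycEdges b' = cycEdges d₂ := by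
    rcases two_of_three (hb₂ ▸ f_mem_cycVerts c₂ 0) (f_mem_cycVerts d₂ 0)
      (hb'0 ▸ f_mem_cycVerts b' 0) hne₂ with h | h
    · exact absurd h hne'
    · exact h
  have hedge : s(d₂.f 0, g (d₁.f 1)) ∈ cycEdges d₂ := by
    rw [← hEb']
    have := edge_mem_cycEdges b' 0
    rw [hb'0, show b'.f (0+1) = g (d₁.f 1) from by rw [hb', mapC_f, zero_add]] at this
    exact this
  rcases next_of_edge hedge with h | h
  · -- aligned
    left
    have haligd : ∀ j, g (d₁.f j) = d₂.f j := by
      have := align hEb' (p := 0) hb'0 (by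
        rw [zero_add]
        show g (d₁.f 1) = d₂.f 1
        rw [zero_add] at h
        exact h) hr2
      intro j
      have hj := this j
      rw [zero_add] at hj
      exact hj
    have : d₂.f σ₂ = d₂.f σ₁ := by
      rw [hσ₂, ← halignc, ← hσ₁, haligd]
    exact d₂.inj this
  · -- reversed
    right
    have haligd : ∀ j, g (d₁.f j) = d₂.f (-j) := by
      have hErev : cycEdges b' = cycEdges (revC d₂) := by rw [cycEdges_revC]; exact hEb'
      have h0' : b'.f 0 = (revC d₂).f 0 := by
        show b'.f 0 = d₂.f (-0)
        rw [neg_zero]; exact hb'0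
      have h1' : b'.f 1 = (revC d₂).f (0+1) := by
        show g (d₁.f 1) = d₂.f (-(0+1))
        rw [show -((0: ZMod (2*S.r))+1) = 0 - 1 from by ring]
        exact h
      have := align hErev (p := 0) h0' h1' hr2
      intro j
      have hj := this j
      rw [zero_add] at hj
      exact hj
    have : d₂.f σ₂ = d₂.f (-σ₁) := by
      rw [hσ₂, ← halignc, ← hσ₁, haligd]
    exact d₂.inj this

end Setup


namespace Setup

variable {V : Type*} {S : Setup V}

lemma cast_mul_ell_iff (J : JumpData S) (x y : ℕ) :
    (((x * J.ell : ℕ) : ZMod (2*S.r)) = ((y * J.ell : ℕ) : ZMod (2*S.r))) ↔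
      ((x : ZMod S.att) = (y : ZMod S.att)) := by
  rw [ZMod.natCast_eq_natCast_iff, ZMod.natCast_eq_natCast_iff, Nat.modEq_iff_dvd,
    Nat.modEq_iff_dvd]
  have hℓ : (J.ell : ℤ) ≠ 0 := by exact_mod_cast (ell_pos J).ne'
  rw [← J.hell]
  push_cast
  constructor
  · intro h
    refine (mul_dvd_mul_iff_right hℓ).mp ?_
    have heq : ((y:ℤ) - x) * J.ell = (y:ℤ) * J.ell - (x:ℤ) * J.ell := by ring
    rw [heq]
    exact h
  · intro h
    have h2 := mul_dvd_mul_right h (J.ell : ℤ)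
    have heq : ((y:ℤ) - x) * J.ell = (y:ℤ) * J.ell - (x:ℤ) * J.ell := by ring
    rw [heq] at h2
    exact h2

lemma cast_mul_ell_neg_iff (J : JumpData S) (x y : ℕ) :
    (((x * J.ell : ℕ) : ZMod (2*S.r)) = -((y * J.ell : ℕ) : ZMod (2*S.r))) ↔
      ((x : ZMod S.att) = -(y : ZMod S.att)) := by
  have key := cast_mul_ell_iff J (x + y) 0
  rw [zero_mul] at key
  simp only [Nat.cast_zero] at key
  constructor
  · intro h
    have h1 : (((x+y) * J.ell : ℕ) : ZMod (2*S.r)) = 0 := by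
      push_cast
      push_cast at h
      linear_combination h
    have h2 := key.mp h1
    push_cast at h2 ⊢
    linear_combination h2
  · intro h
    have h2 : ((x+y : ℕ) : ZMod S.att) = 0 := by push_cast; linear_combination h
    have h1 := key.mpr h2
    push_cast at h1 ⊢
    linear_combination h1

/-- Extract the natural-number representative of a rotation amount. -/
lemma rep_of (J : JumpData S) {t : ZMod (2*S.r)} (ht : J.ell ∣ t.val) :
    ∃ m : ℕ, m < S.att ∧ t = ((m * J.ell : ℕ) : ZMod (2*S.r)) ∧ (t ≠ 0 → 0 < m) := by
  haveI := S.nz2r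
  refine ⟨t.val / J.ell, ?_, ?_, ?_⟩
  · have hlt2 : t.val < S.att * J.ell := by rw [J.hell]; exact ZMod.val_lt t
    exact (Nat.div_lt_iff_lt_mul (ell_pos J)).mpr hlt2
  · rw [Nat.div_mul_cancel ht]
    simp [ZMod.natCast_val, ZMod.cast_id]
  · intro ht0
    rcases Nat.eq_zero_or_pos (t.val / J.ell) with h | h
    · exfalso
      have : t.val = 0 := by
        have := Nat.div_mul_cancel ht
        rw [h, zero_mul] at this
        omega
      exact ht0 (by rwa [ZMod.val_eq_zero] at this)
    · exact h

lemma isRot_of (c : S.AC) (γ : S.Γ ≃g S.Γ) {t : ZMod (2*S.r)}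
    (hrot : ∀ i, γ (c.f i) = c.f (i + t)) (x : ℕ)
    (hx : ((x : ℕ) : ZMod (2*S.r)) = t ∨ ((x : ℕ) : ZMod (2*S.r)) = -t) :
    IsRot c (γ : V → V) x := by
  rcases hx with h | h
  · left
    intro i
    rw [h]
    exact hrot i
  · right
    intro i
    rw [h, sub_neg_eq_add]
    exact hrot i

lemma rot_shift {c : S.AC} {γ : S.Γ ≃g S.Γ} {t : ZMod (2*S.r)}
    (h : ∀ i, γ (c.f i) = c.f (i + t)) (p : ZMod (2*S.r)) :
    ∀ i, γ ((shiftC c p).f i) = (shiftC c p).f (i + t) := by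
  intro i
  simp only [shiftC_f]
  rw [h (p+i)]
  congr 1
  ring

lemma rot_transfer {b c : S.AC} (hE : cycEdges b = cycEdges c) (hr2 : 2 ≤ S.r)
    {γ : S.Γ ≃g S.Γ} {t : ZMod (2*S.r)} (hc : ∀ i, γ (c.f i) = c.f (i + t)) :
    (∀ i, γ (b.f i) = b.f (i + t)) ∨ (∀ i, γ (b.f i) = b.f (i - t)) := by
  obtain ⟨p, hshift | hrefl⟩ := param_rel hE hr2
  · left
    intro i
    rw [hshift i, hc (p+i), hshift (i+t)]
    congr 1
    ring
  · right
    intro i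
    rw [hrefl i, hc (p-i), hrefl (i-t)]
    congr 1
    ring

lemma isTail_shiftC (c : S.AC) (p i : ZMod (2*S.r)) :
    isTail (shiftC c p) i ↔ isTail c (p+i) := by
  unfold isTail
  simp only [shiftC_f]
  rw [show p + (i+1) = p + i + 1 from by ring]

/-- One direction of the adjacent-cycles relation, for a based configuration with
the tail side first. -/
lemma adj_rel_one (J : JumpData S) (hr2 : 2 ≤ S.r) (h3 : 3 ≤ S.att)
    {σJ : ZMod (2*S.r)} {sn : ℕ} (hσJ : J.c'.f σJ = J.c.f ((J.ell : ℕ) : ZMod (2*S.r)))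
    (hsn : σJ = ((sn * J.ell : ℕ) : ZMod (2*S.r)))
    {C D : S.AC} (hne : cycEdges C ≠ cycEdges D) (hbase : C.f 0 = D.f 0)
    (htail : isTail C 0) {γ : S.Γ ≃g S.Γ} {tC tD : ZMod (2*S.r)}
    (hC : ∀ i, γ (C.f i) = C.f (i + tC)) (hD : ∀ j, γ (D.f j) = D.f (j + tD))
    {mC mD : ℕ} (hmC : tC = ((mC * J.ell : ℕ) : ZMod (2*S.r)))
    (hmD : tD = ((mD * J.ell : ℕ) : ZMod (2*S.r))) :
    ((mD : ZMod S.att) = (sn * mC : ℕ) ∨ (mD : ZMod S.att) = -((sn * mC : ℕ) : ZMod S.att)) := by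
  haveI := S.nz2r
  obtain ⟨σ, hσ, hσL⟩ := slope_exists J hr2 h3 hne hbase
  have hrel : tD = ((mC : ℕ) : ZMod (2*S.r)) * σ :=
    pair_rel J hr2 h3 hne hbase hσ hC hD mC hmC
  have hJbase : J.c.f 0 = J.c'.f 0 := by rw [J.hc, J.hc']
  have hJtail : isTail J.c 0 := by
    show S.O (J.c.f 0) (J.c.f (0+1))
    rw [zero_add, J.hc]
    exact J.htail₁
  have htrans := slope_transport J hr2 h3 J.hne hJbase hJtail hne hbase htail hσJ hσ
  rcases htrans with h | h
  · left
    rw [← cast_mul_ell_iff J]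
    rw [hmD] at hrel
    rw [h, hsn] at hrel
    rw [hrel]
    push_cast
    ring
  · right
    rw [← cast_mul_ell_neg_iff J]
    rw [hmD] at hrel
    rw [h, hsn] at hrel
    rw [hrel]
    push_cast
    ring

/-- Both directions of the adjacent-cycles relation for intersecting cycles. -/
lemma adj_rel_full (J : JumpData S) (hr2 : 2 ≤ S.r) (h3 : 3 ≤ S.att)
    (har : S.att < S.r) (hdvd : ¬ S.att ∣ S.r)
    {σJ : ZMod (2*S.r)} {sn : ℕ} (hσJ : J.c'.f σJ = J.c.f ((J.ell : ℕ) : ZMod (2*S.r)))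
    (hsn : σJ = ((sn * J.ell : ℕ) : ZMod (2*S.r)))
    {c₁ c₂ : S.AC} (hne : cycEdges c₁ ≠ cycEdges c₂)
    (hint : (cycVerts c₁ ∩ cycVerts c₂).Nonempty) {γ : S.Γ ≃g S.Γ}
    {t₁ t₂ : ZMod (2*S.r)} (h₁ : ∀ i, γ (c₁.f i) = c₁.f (i + t₁))
    (h₂ : ∀ j, γ (c₂.f j) = c₂.f (j + t₂))
    {m₁ m₂ : ℕ} (hm₁ : t₁ = ((m₁ * J.ell : ℕ) : ZMod (2*S.r)))
    (hm₂ : t₂ = ((m₂ * J.ell : ℕ) : ZMod (2*S.r))) :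
    ((m₂ : ZMod S.att) = (sn * m₁ : ℕ) ∨ (m₂ : ZMod S.att) = -((sn * m₁ : ℕ) : ZMod S.att)) ∧
    ((m₁ : ZMod S.att) = (sn * m₂ : ℕ) ∨ (m₁ : ZMod S.att) = -((sn * m₂ : ℕ) : ZMod S.att)) := by
  haveI := S.nz2r
  obtain ⟨v, hv₁, hv₂⟩ := hint
  obtain ⟨x₁, hx₁⟩ := hv₁
  obtain ⟨x₂, hx₂⟩ := hv₂
  -- based shifted parametrisations
  set C := shiftC c₁ x₁ with hCdef
  set D := shiftC c₂ x₂ with hDdef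
  have hbase : C.f 0 = D.f 0 := by
    simp only [hCdef, hDdef, shiftC_f, add_zero]
    rw [hx₁, hx₂]
  have hneCD : cycEdges C ≠ cycEdges D := by
    rw [hCdef, hDdef, cycEdges_shiftC, cycEdges_shiftC]
    exact hne
  have hCrot : ∀ i, γ (C.f i) = C.f (i + t₁) := rot_shift h₁ x₁
  have hDrot : ∀ j, γ (D.f j) = D.f (j + t₂) := rot_shift h₂ x₂
  -- helper producing the relation from a tail-based config on (X, Y)
  have main : ∀ (X Y : S.AC), cycEdges X ≠ cycEdges Y → X.f 0 = Y.f 0 → isTail X 0 →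
      ∀ (tX tY : ZMod (2*S.r)), (∀ i, γ (X.f i) = X.f (i + tX)) →
      (∀ j, γ (Y.f j) = Y.f (j + tY)) → ∀ (mX mY : ℕ),
      tX = ((mX * J.ell : ℕ) : ZMod (2*S.r)) → tY = ((mY * J.ell : ℕ) : ZMod (2*S.r)) →
      ((mY : ZMod S.att) = (sn * mX : ℕ) ∨ (mY : ZMod S.att) = -((sn * mX : ℕ) : ZMod S.att)) ∧
      ((mX : ZMod S.att) = (sn * mY : ℕ) ∨ (mX : ZMod S.att) = -((sn * mY : ℕ) : ZMod S.att)) := by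
    intro X Y hneXY hbXY htX tX tY hXr hYr mX mY hmX hmY
    constructor
    · exact adj_rel_one J hr2 h3 hσJ hsn hneXY hbXY htX hXr hYr hmX hmY
    · -- second attachment point, tail on Y
      have hmem : X.f ((J.ell : ℕ) : ZMod (2*S.r)) ∈ cycVerts Y := by
        rw [spacing J hr2 h3 hneXY hbXY]
        have := ell_cast_val_dvd J 1
        rwa [one_mul] at this
      obtain ⟨y, hy⟩ := hmem
      have hXnott : ¬ isTail X ((J.ell : ℕ) : ZMod (2*S.r)) := by
        have hpar := isTail_add_nat X 0 J.ell
        rw [zero_add] at hpar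
        rw [hpar]
        intro hcon
        have heven := hcon.mpr htX
        exact ell_odd J hdvd heven.two_dvd
      have hYtail : isTail Y y := by
        have := tail_xor J (c := X) (d := Y) hy.symm hneXY
        by_contra hcon
        exact hXnott (this.mpr (by
          intro h2
          exact hcon h2))
      -- the swapped based configuration
      have hbase2 : (shiftC Y y).f 0 = (shiftC X ((J.ell : ℕ) : ZMod (2*S.r))).f 0 := by
        simp only [shiftC_f, add_zero]
        exact hy
      have hne2 : cycEdges (shiftC Y y) ≠ cycEdges (shiftC X ((J.ell : ℕ) : ZMod (2*S.r))) := by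
        rw [cycEdges_shiftC, cycEdges_shiftC]
        exact fun h => hneXY h.symm
      have ht2 : isTail (shiftC Y y) 0 := by
        rw [isTail_shiftC, add_zero]
        exact hYtail
      exact adj_rel_one J hr2 h3 hσJ hsn hne2 hbase2 ht2
        (rot_shift hYr y) (rot_shift hXr _) hmY hmX
  by_cases htC : isTail C 0
  · exact main C D hneCD hbase htC t₁ t₂ hCrot hDrot m₁ m₂ hm₁ hm₂
  · have htD : isTail D 0 := by
      have := tail_xor J (c := C) (d := D) hbase hneCD
      by_contra hcon
      exact htC (this.mpr hcon)
    have := main D C (fun h => hneCD h.symm) hbase.symm htD t₂ t₁ hDrot hCrot m₂ m₁ hm₂ hm₁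
    exact ⟨this.2, this.1⟩

end Setup


namespace Setup

section PMsec

variable {R : Type*} [CommRing R]

/-- Equality up to sign. -/
def PM (a b : R) : Prop := a = b ∨ a = -b

lemma PM.refl' (a : R) : PM a a := Or.inl rfl

lemma PM.symm' {a b : R} (h : PM a b) : PM b a := by
  rcases h with h | h
  · exact Or.inl h.symm
  · right; rw [h, neg_neg]

lemma PM.trans' {a b c : R} (h1 : PM a b) (h2 : PM b c) : PM a c := by
  rcases h1 with h1 | h1 <;> rcases h2 with h2 | h2
  · exact Or.inl (h1.trans h2)
  · exact Or.inr (h1.trans h2)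
  · exact Or.inr (by rw [h1, h2])
  · exact Or.inl (by rw [h1, h2, neg_neg])

lemma PM.mul_left' (c : R) {a b : R} (h : PM a b) : PM (c*a) (c*b) := by
  rcases h with h | h
  · exact Or.inl (by rw [h])
  · right; rw [h]; ring

lemma PM.mul' {a b x y : R} (h1 : PM a b) (h2 : PM x y) : PM (a*x) (b*y) := by
  rcases h1 with h1 | h1 <;> rcases h2 with h2 | h2
  · exact Or.inl (by rw [h1, h2])
  · right; rw [h1, h2]; ring
  · right; rw [h1, h2]; ring
  · left; rw [h1, h2]; ring

end PMsec

variable {V : Type*} {S : Setup V}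

lemma rot_of_PM (J : JumpData S) (c : S.AC) (γ : S.Γ ≃g S.Γ) {t : ZMod (2*S.r)}
    (hrot : ∀ i, γ (c.f i) = c.f (i + t)) {m : ℕ}
    (hm : t = ((m * J.ell : ℕ) : ZMod (2*S.r))) (x : ℕ)
    (hPM : PM ((x : ZMod S.att)) ((m : ZMod S.att))) :
    IsRot c (γ : V → V) (x * J.ell) := by
  apply isRot_of c γ hrot
  rcases hPM with h | h
  · left
    rw [hm]
    exact_mod_cast (cast_mul_ell_iff J x m).mpr h
  · right
    rw [hm]
    exact_mod_cast (cast_mul_ell_neg_iff J x m).mpr h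

/-- Two one-sided rotation amounts on the same parametrised cycle coincide. -/
lemma rot_unique {c : S.AC} {γ : S.Γ ≃g S.Γ} {t t' : ZMod (2*S.r)}
    (h1 : ∀ i, γ (c.f i) = c.f (i + t)) (h2 : ∀ i, γ (c.f i) = c.f (i + t')) : t = t' := by
  have := (h1 0).symm.trans (h2 0)
  have h := c.inj this
  linear_combination h

end Setup


end HalfArc


open HalfArc

open HalfArc.Setup

/-- Corollary 6.2 of the paper: nontrivial elements of the kernel
act as `kℓ`-step rotations, and as a `kℓ`-step rotation on one and a `qkℓ`-step
rotation on the other of any two non-disjoint `G`-alternating cycles. -/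
theorem statement_15 {V : Type*} (S : Setup V) (h3 : 3 ≤ S.att) (har : S.att < S.r)
    (hdvd : ¬ S.att ∣ S.r) (J : JumpData S)
    (γ : S.Γ ≃g S.Γ) (hγ : γ ∈ S.altKernel) (hγ1 : γ ≠ 1)
    (c : AltCycle S.Γ S.O (2 * S.r)) :
    ∃ k : ℕ, 0 < k ∧ 2 * k ≤ S.att ∧ IsRot c (γ : V → V) (k * J.ell) ∧
      ∀ c₁ c₂ : AltCycle S.Γ S.O (2 * S.r), cycEdges c₁ ≠ cycEdges c₂ →
        (cycVerts c₁ ∩ cycVerts c₂).Nonempty →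
        ((IsRot c₁ (γ : V → V) (k * J.ell) ∧ IsRot c₂ (γ : V → V) (J.jump * k * J.ell)) ∨
         (IsRot c₁ (γ : V → V) (J.jump * k * J.ell) ∧ IsRot c₂ (γ : V → V) (k * J.ell))) := by
  haveI := S.nz2r
  have hr2 : 2 ≤ S.r := by omega
  -- rotation data on c
  obtain ⟨t₀, hrot₀, hL₀⟩ := kernel_rot J hr2 h3 har hdvd hγ c
  have ht₀ : t₀ ≠ 0 := by
    intro h0
    exact hγ1 (kernel_id_of_fix J hr2 h3 har hdvd hγ c
      (by rintro v ⟨i, rfl⟩; rw [hrot₀ i, h0, add_zero]))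
  obtain ⟨m₀, hm₀lt, hm₀eq, hm₀pos'⟩ := rep_of J hL₀
  have hm₀pos : 0 < m₀ := hm₀pos' ht₀
  -- slope of J's configuration
  have hJbase : J.c.f 0 = J.c'.f 0 := by rw [J.hc, J.hc']
  obtain ⟨σJ, hσJ, hσJL⟩ := slope_exists J hr2 h3 J.hne hJbase
  obtain ⟨sn, hsnlt, hsn, -⟩ := rep_of J hσJL
  -- pair relation wrapper producing PM forms
  have pairPM : ∀ (c₁ c₂ : S.AC), cycEdges c₁ ≠ cycEdges c₂ →
      (cycVerts c₁ ∩ cycVerts c₂).Nonempty →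
      ∀ (t₁ t₂ : ZMod (2*S.r)) (m₁ m₂ : ℕ),
      (∀ i, γ (c₁.f i) = c₁.f (i + t₁)) → (∀ j, γ (c₂.f j) = c₂.f (j + t₂)) →
      t₁ = ((m₁ * J.ell : ℕ) : ZMod (2*S.r)) → t₂ = ((m₂ * J.ell : ℕ) : ZMod (2*S.r)) →
      PM ((m₂ : ZMod S.att)) ((sn : ZMod S.att) * (m₁ : ZMod S.att)) ∧
      PM ((m₁ : ZMod S.att)) ((sn : ZMod S.att) * (m₂ : ZMod S.att)) := by
    intro c₁ c₂ hne hint t₁ t₂ m₁ m₂ h₁ h₂ hm₁ hm₂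
    obtain ⟨ha, hb⟩ := adj_rel_full J hr2 h3 har hdvd hσJ hsn hne hint h₁ h₂ hm₁ hm₂
    constructor
    · rcases ha with h | h
      · left; rw [h]; push_cast; ring
      · right; rw [h]; push_cast; ring
    · rcases hb with h | h
      · left; rw [h]; push_cast; ring
      · right; rw [h]; push_cast; ring
  -- square fact
  obtain ⟨d₀, hd₀v, hd₀ne⟩ := other_cycle c 0
  obtain ⟨t₀', hrot₀', hL₀'⟩ := kernel_rot J hr2 h3 har hdvd hγ d₀
  obtain ⟨m₀', hm₀'lt, hm₀'eq, -⟩ := rep_of J hL₀'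
  obtain ⟨hp1, hp2⟩ := pairPM c d₀ (fun h => hd₀ne h.symm) ⟨c.f 0, f_mem_cycVerts c 0, hd₀v⟩
    t₀ t₀' m₀ m₀' hrot₀ hrot₀' hm₀eq hm₀'eq
  have hsq : PM ((sn : ZMod S.att) * ((sn : ZMod S.att) * (m₀ : ZMod S.att)))
      ((m₀ : ZMod S.att)) :=
    ((PM.mul_left' _ hp1).symm').trans' hp2.symm'
  -- k
  set k := min m₀ (S.att - m₀) with hk
  have hk0 : 0 < k := by omega
  have h2k : 2*k ≤ S.att := by omega
  have hkM : PM ((k : ZMod S.att)) ((m₀ : ZMod S.att)) := by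
    rcases le_total m₀ (S.att - m₀) with h | h
    · left
      rw [hk, min_eq_left h]
    · right
      rw [hk, min_eq_right h, Nat.cast_sub (le_of_lt hm₀lt), ZMod.natCast_self]
      ring
  -- qt relation
  have hqtr : PM ((J.qt : ZMod S.att)) ((sn : ZMod S.att)) := by
    rcases J.hqt with h | h
    · left
      rw [← hσJ] at h
      have h2 := J.c'.inj h
      rw [hsn] at h2
      exact (cast_mul_ell_iff J J.qt sn).mp h2
    · right
      obtain ⟨g, hg, hgc, hgc'⟩ := refl_exists J hr2 h3 J.hne hJbase
      have hrefl : J.c.f (-((J.ell : ℕ) : ZMod (2*S.r))) = J.c'.f (-σJ) := by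
        calc J.c.f (-((J.ell : ℕ) : ZMod (2*S.r)))
            = g (J.c.f ((J.ell : ℕ) : ZMod (2*S.r))) := (hgc _).symm
          _ = g (J.c'.f σJ) := by rw [hσJ]
          _ = J.c'.f (-σJ) := hgc' σJ
      rw [hrefl] at h
      have h2 := J.c'.inj h
      rw [hsn] at h2
      exact (cast_mul_ell_neg_iff J J.qt sn).mp h2
  -- qh relation
  have hqhr : PM ((J.qh : ZMod S.att) * (sn : ZMod S.att)) 1 := by
    have hlin := slope_lin J hr2 h3 J.hne hJbase hσJ J.qh
    rcases J.hqh with h | h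
    · left
      rw [← hlin] at h
      have h2 := J.c'.inj h
      rw [hsn] at h2
      push_cast at h2
      have h3' : ((J.qh * sn * J.ell : ℕ) : ZMod (2*S.r)) = ((1 * J.ell : ℕ) : ZMod (2*S.r)) := by
        push_cast
        linear_combination h2
      have h4 := (cast_mul_ell_iff J (J.qh * sn) 1).mp h3'
      push_cast at h4
      exact h4
    · right
      rw [← hlin] at h
      have h2 := J.c'.inj h
      rw [hsn] at h2
      push_cast at h2
      have h3' : ((J.qh * sn * J.ell : ℕ) : ZMod (2*S.r)) = -((1 * J.ell : ℕ) : ZMod (2*S.r)) := by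
        push_cast
        linear_combination h2
      have h4 := (cast_mul_ell_neg_iff J (J.qh * sn) 1).mp h3'
      push_cast at h4
      exact h4
  -- helper : PM respects ring equalities
  have pm_of_eq : ∀ {a b a' b' : ZMod S.att}, a = a' → b = b' → PM a' b' → PM a b := by
    rintro a b a' b' rfl rfl h
    exact h
  -- jump fact
  have hjk : PM (((J.jump * k : ℕ) : ZMod S.att)) ((sn : ZMod S.att) * (m₀ : ZMod S.att)) := by
    have hcast : ((J.jump * k : ℕ) : ZMod S.att) = (J.jump : ZMod S.att) * (k : ZMod S.att) := by
      push_cast; ring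
    rw [hcast]
    have hj : J.jump = J.qt ∨ J.jump = J.qh := by
      unfold JumpData.jump
      rcases le_total J.qt J.qh with h | h
      · left; exact min_eq_left h
      · right; exact min_eq_right h
    rcases hj with hj | hj
    · rw [hj]
      exact PM.mul' hqtr hkM
    · rw [hj]
      have s1 : PM ((J.qh : ZMod S.att) * (k : ZMod S.att))
          ((J.qh : ZMod S.att) * (m₀ : ZMod S.att)) := PM.mul_left' _ hkM
      have s2 : PM ((J.qh : ZMod S.att) * (m₀ : ZMod S.att))
          ((J.qh : ZMod S.att) * ((sn : ZMod S.att) * ((sn : ZMod S.att) * (m₀ : ZMod S.att)))) :=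
        PM.mul_left' _ hsq.symm'
      have s4 : PM ((J.qh : ZMod S.att) * ((sn : ZMod S.att) * ((sn : ZMod S.att) * (m₀ : ZMod S.att))))
          ((sn : ZMod S.att) * (m₀ : ZMod S.att)) := by
        refine pm_of_eq (show _ = ((J.qh : ZMod S.att) * (sn : ZMod S.att)) *
          ((sn : ZMod S.att) * (m₀ : ZMod S.att)) from by ring)
          (show _ = (1 : ZMod S.att) * ((sn : ZMod S.att) * (m₀ : ZMod S.att)) from by ring) ?_
        exact PM.mul' hqhr (PM.refl' _)
      exact (s1.trans' s2).trans' s4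
  -- the class of a rotation amount
  set cls : ℕ → Prop := fun m => PM ((m : ZMod S.att)) ((m₀ : ZMod S.att)) ∨
    PM ((m : ZMod S.att)) ((sn : ZMod S.att) * (m₀ : ZMod S.att)) with hclsdef
  have cls_of_PM : ∀ {x y : ℕ}, PM ((x : ZMod S.att)) ((y : ZMod S.att)) → cls y → cls x := by
    intro x y h hy
    rcases hy with hy | hy
    · exact Or.inl (h.trans' hy)
    · exact Or.inr (h.trans' hy)
  -- propagation over the graph
  have hPP : ∀ (Y : S.AC), (∀ (t : ZMod (2*S.r)) (m : ℕ), (∀ i, γ (Y.f i) = Y.f (i + t)) →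
        t = ((m * J.ell : ℕ) : ZMod (2*S.r)) → cls m) →
      ∀ (X : S.AC), (∃ v, v ∈ cycVerts Y ∧ v ∈ cycVerts X) →
      ∀ (t : ZMod (2*S.r)) (m : ℕ), (∀ i, γ (X.f i) = X.f (i + t)) →
      t = ((m * J.ell : ℕ) : ZMod (2*S.r)) → cls m := by
    intro Y hY X hint t m hXr hm
    obtain ⟨tY, hYr, hLY⟩ := kernel_rot J hr2 h3 har hdvd hγ Y
    obtain ⟨mY, -, hmYeq, -⟩ := rep_of J hLY
    have hclsY : cls mY := hY tY mY hYr hmYeq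
    by_cases hE : cycEdges X = cycEdges Y
    · have htr := rot_transfer hE hr2 hYr
      have hPMxy : PM ((m : ZMod S.att)) ((mY : ZMod S.att)) := by
        rcases htr with htr | htr
        · have heq : t = tY := rot_unique hXr htr
          left
          rw [hm, hmYeq] at heq
          exact (cast_mul_ell_iff J m mY).mp heq
        · have heq : t = -tY := by
            have h0 := (hXr 0).symm.trans (htr 0)
            have h0' := X.inj h0
            linear_combination h0'
          right
          rw [hm, hmYeq] at heq
          exact (cast_mul_ell_neg_iff J m mY).mp heq
      exact cls_of_PM hPMxy hclsY
    · obtain ⟨v, hvY, hvX⟩ := hint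
      obtain ⟨ha, -⟩ := pairPM Y X (fun h => hE h.symm) ⟨v, hvY, hvX⟩ tY t mY m hYr hXr hmYeq hm
      rcases hclsY with hy | hy
      · exact Or.inr (ha.trans' (PM.mul_left' _ hy))
      · exact Or.inl ((ha.trans' (PM.mul_left' _ hy)).trans' hsq)
  have hPc : ∀ (t : ZMod (2*S.r)) (m : ℕ), (∀ i, γ (c.f i) = c.f (i + t)) →
      t = ((m * J.ell : ℕ) : ZMod (2*S.r)) → cls m := by
    intro t m hXr hm
    have heq : t = t₀ := rot_unique hXr hrot₀
    rw [hm, hm₀eq] at heq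
    exact Or.inl (Or.inl ((cast_mul_ell_iff J m m₀).mp heq))
  set good : V → Prop := fun v => ∀ (X : S.AC) (y : ZMod (2*S.r)), X.f y = v →
    ∀ (t : ZMod (2*S.r)) (m : ℕ), (∀ i, γ (X.f i) = X.f (i + t)) →
    t = ((m * J.ell : ℕ) : ZMod (2*S.r)) → cls m with hgooddef
  have hbase : good (c.f 0) := by
    intro X y hy
    exact hPP c hPc X ⟨c.f 0, f_mem_cycVerts c 0, ⟨y, hy⟩⟩
  have hstep : ∀ v w, S.Γ.Adj v w → good v → good w := by
    intro v w hadj hv X z hz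
    obtain ⟨F, hF⟩ := edge_on_cycle J hadj
    have hvF : v ∈ cycVerts F := by
      rw [← suppOf_cycEdges]
      exact ⟨_, hF, Sym2.mem_mk_left _ _⟩
    have hwF : w ∈ cycVerts F := by
      rw [← suppOf_cycEdges]
      exact ⟨_, hF, Sym2.mem_mk_right _ _⟩
    obtain ⟨yv, hyv⟩ := hvF
    exact hPP F (hv F yv hyv) X ⟨w, hwF, ⟨z, hz⟩⟩
  have keywalk : ∀ u v (wlk : S.Γ.Walk u v), good u → good v := by
    intro u v wlk
    induction wlk with
    | nil => exact id
    | cons hadj w ih => exact fun hu => ih (hstep _ _ hadj hu)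
  have hP : ∀ (X : S.AC) (t : ZMod (2*S.r)) (m : ℕ), (∀ i, γ (X.f i) = X.f (i + t)) →
      t = ((m * J.ell : ℕ) : ZMod (2*S.r)) → cls m := by
    intro X t m hXr hm
    have hg : good (X.f 0) := by
      obtain ⟨wlk⟩ := S.conn.preconnected (c.f 0) (X.f 0)
      exact keywalk _ _ wlk hbase
    exact hg X 0 rfl t m hXr hm
  -- conclusion
  refine ⟨k, hk0, h2k, ?_, ?_⟩
  · exact rot_of_PM J c γ hrot₀ hm₀eq k hkM
  · intro c₁ c₂ hne hint
    obtain ⟨t₁, h₁, hL₁⟩ := kernel_rot J hr2 h3 har hdvd hγ c₁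
    obtain ⟨m₁, -, hm₁eq, -⟩ := rep_of J hL₁
    obtain ⟨t₂, h₂, hL₂⟩ := kernel_rot J hr2 h3 har hdvd hγ c₂
    obtain ⟨m₂, -, hm₂eq, -⟩ := rep_of J hL₂
    have hcls₁ : cls m₁ := hP c₁ t₁ m₁ h₁ hm₁eq
    obtain ⟨ha, -⟩ := pairPM c₁ c₂ hne hint t₁ t₂ m₁ m₂ h₁ h₂ hm₁eq hm₂eq
    rcases hcls₁ with hy | hy
    · left
      constructor
      · exact rot_of_PM J c₁ γ h₁ hm₁eq k (hkM.trans' hy.symm')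
      · have hm₂cls : PM ((m₂ : ZMod S.att)) ((sn : ZMod S.att) * (m₀ : ZMod S.att)) :=
          ha.trans' (PM.mul_left' _ hy)
        exact rot_of_PM J c₂ γ h₂ hm₂eq (J.jump * k) (hjk.trans' hm₂cls.symm')
    · right
      constructor
      · exact rot_of_PM J c₁ γ h₁ hm₁eq (J.jump * k) (hjk.trans' hy.symm')
      · have hm₂cls : PM ((m₂ : ZMod S.att)) ((m₀ : ZMod S.att)) :=
          (ha.trans' (PM.mul_left' _ hy)).trans' hsq
        exact rot_of_PM J c₂ γ h₂ hm₂eq k (hkM.trans' hm₂cls.symm')
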